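/- arXiv:2411.07514 — 10 statements merged into one kernel-verified Lean document; each statement's English description precedes it below -/
import Mathlib

section
/- Let 𝒳 be a finite nonempty set, P₀ ∈ Δ(𝒳), ℓ : 𝒳 → ℝ, and ξ ≥ 0. Then the infimum of E_P[ℓ] over all P ∈ Δ(𝒳) with TV(P, P₀) ≤ ξ equals the supremum over λ ∈ ℝ of λ − E_{P₀}[(λ − ℓ)₊] − ξ·max_{x∈𝒳}(λ − ℓ(x))₊; moreover both the infimum and the supremum are attained. -/
open scoped BigOperators
open Finset

lemma tv_weak {X : Type*} [Fintype X] [Nonempty X]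
    (P₀ P : X → ℝ) (hP0 : ∀ x, 0 ≤ P x) (hP1 : ∑ x, P x = 1)
    (hP₀1 : ∑ x, P₀ x = 1) (l : X → ℝ) (ξ : ℝ)
    (hTV : (∑ x, |P x - P₀ x|) / 2 ≤ ξ) (lam : ℝ) :
    lam - (∑ x, P₀ x * max (lam - l x) 0)
      - ξ * Finset.univ.sup' Finset.univ_nonempty (fun x => max (lam - l x) 0)
      ≤ ∑ x, P x * l x := by
  classical
  set M := Finset.univ.sup' Finset.univ_nonempty (fun x => max (lam - l x) 0) with hM
  obtain ⟨z⟩ : Nonempty X := inferInstance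
  have hM0 : 0 ≤ M := le_trans (le_max_right (lam - l z) 0) (Finset.le_sup' (fun x => max (lam - l x) 0) (mem_univ z))
  have hkey : ∀ u : ℝ, max u 0 = (|u| + u) / 2 := by
    intro u
    rcases le_or_gt u 0 with h | h
    · rw [max_eq_right h, abs_of_nonpos h]; ring
    · rw [max_eq_left h.le, abs_of_pos h]; ring
  have hplus : ∑ x, max (P x - P₀ x) 0 ≤ ξ := by
    have : ∑ x, max (P x - P₀ x) 0
        = (∑ x, |P x - P₀ x| + (∑ x, P x - ∑ x, P₀ x)) / 2 := by
      rw [← Finset.sum_sub_distrib, ← Finset.sum_add_distrib, Finset.sum_div]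
      exact Finset.sum_congr rfl fun x _ => by rw [hkey]
    rw [this, hP1, hP₀1]
    simpa using hTV
  have h1 : ∑ x, P x * max (lam - l x) 0 ≤ ∑ x, P₀ x * max (lam - l x) 0 + ξ * M := by
    have hd : ∑ x, P x * max (lam - l x) 0 - ∑ x, P₀ x * max (lam - l x) 0
        = ∑ x, (P x - P₀ x) * max (lam - l x) 0 := by
      rw [← Finset.sum_sub_distrib]
      exact Finset.sum_congr rfl fun x _ => by ring
    have hb : ∑ x, (P x - P₀ x) * max (lam - l x) 0 ≤ ∑ x, max (P x - P₀ x) 0 * M := by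
      refine Finset.sum_le_sum fun x _ => ?_
      exact mul_le_mul (le_max_left _ _) (Finset.le_sup' (fun x => max (lam - l x) 0) (mem_univ x))
        (le_max_right _ _) (le_max_right _ _)
    have hc : ∑ x, max (P x - P₀ x) 0 * M ≤ ξ * M := by
      rw [← Finset.sum_mul]
      exact mul_le_mul_of_nonneg_right hplus hM0
    linarith
  have h2 : lam ≤ ∑ x, P x * l x + ∑ x, P x * max (lam - l x) 0 := by
    have : ∀ x, P x * lam ≤ P x * l x + P x * max (lam - l x) 0 := by
      intro x
      have : lam ≤ l x + max (lam - l x) 0 := by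
        have := le_max_left (lam - l x) 0; linarith
      calc P x * lam ≤ P x * (l x + max (lam - l x) 0) :=
            mul_le_mul_of_nonneg_left this (hP0 x)
        _ = P x * l x + P x * max (lam - l x) 0 := by ring
    have hsum := Finset.sum_le_sum (s := Finset.univ) (fun x _ => this x)
    rw [← Finset.sum_mul, hP1, one_mul, Finset.sum_add_distrib] at hsum
    exact hsum
  linarith

theorem stmt0 {X : Type*} [Fintype X] [Nonempty X]
    (P₀ : X → ℝ) (hP₀0 : ∀ x, 0 ≤ P₀ x) (hP₀1 : ∑ x, P₀ x = 1)
    (l : X → ℝ) (ξ : ℝ) (hξ : 0 ≤ ξ) :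
    ∃ v : ℝ,
      IsLeast {w : ℝ | ∃ P : X → ℝ, (∀ x, 0 ≤ P x) ∧ (∑ x, P x = 1) ∧
          (∑ x, |P x - P₀ x|) / 2 ≤ ξ ∧ w = ∑ x, P x * l x} v ∧
      IsGreatest {w : ℝ | ∃ lam : ℝ,
          w = lam - (∑ x, P₀ x * max (lam - l x) 0)
            - ξ * Finset.univ.sup' Finset.univ_nonempty (fun x => max (lam - l x) 0)} v := by
  classical
  obtain ⟨x₀, -, hx₀u⟩ := Finset.exists_min_image Finset.univ l ⟨Classical.arbitrary X, Finset.mem_univ _⟩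
  set m := l x₀ with hm
  have hx₀ : ∀ x, m ≤ l x := fun x => hx₀u x (Finset.mem_univ x)
  -- helper that builds the conclusion from a primal-dual optimal pair
  have build : ∀ (P : X → ℝ) (lam : ℝ), (∀ x, 0 ≤ P x) → (∑ x, P x = 1) →
      ((∑ x, |P x - P₀ x|) / 2 ≤ ξ) →
      (∑ x, P x * l x = lam - (∑ x, P₀ x * max (lam - l x) 0)
        - ξ * Finset.univ.sup' Finset.univ_nonempty (fun x => max (lam - l x) 0)) →
      (∃ v : ℝ,
        IsLeast {w : ℝ | ∃ P : X → ℝ, (∀ x, 0 ≤ P x) ∧ (∑ x, P x = 1) ∧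
            (∑ x, |P x - P₀ x|) / 2 ≤ ξ ∧ w = ∑ x, P x * l x} v ∧
        IsGreatest {w : ℝ | ∃ lam : ℝ,
            w = lam - (∑ x, P₀ x * max (lam - l x) 0)
              - ξ * Finset.univ.sup' Finset.univ_nonempty (fun x => max (lam - l x) 0)} v) := by
    intro P lam h0 h1 h2 h3
    refine ⟨∑ x, P x * l x, ⟨⟨P, h0, h1, h2, rfl⟩, ?_⟩, ⟨lam, h3⟩, ?_⟩
    · rintro w ⟨Q, hQ0, hQ1, hQtv, rfl⟩
      rw [h3]
      exact tv_weak P₀ Q hQ0 hQ1 hP₀1 l ξ hQtv lam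
    · rintro w ⟨lam', rfl⟩
      exact tv_weak P₀ P h0 h1 hP₀1 l ξ h2 lam'
  set F : ℝ → ℝ := fun t => ∑ x ∈ Finset.univ.filter (fun x => t < l x), P₀ x with hFdef
  have hFnn : ∀ t, 0 ≤ F t := fun t => Finset.sum_nonneg fun x _ => hP₀0 x
  by_cases hcase : F m ≤ ξ
  · -- Case 1: can move everything to the minimum; value = m, lam = m
    set P : X → ℝ := fun x => if l x = m then (if x = x₀ then P₀ x + F m else P₀ x) else 0
      with hPdef
    have hfeq : Finset.univ.filter (fun x => ¬ l x = m) = Finset.univ.filter (fun x => m < l x) := by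
      ext x
      simp only [Finset.mem_filter, Finset.mem_univ, true_and]
      exact ⟨fun h => lt_of_le_of_ne (hx₀ x) (Ne.symm h), fun h => (ne_of_gt h)⟩
    have hx₀mem : x₀ ∈ Finset.univ.filter (fun x => l x = m) :=
      Finset.mem_filter.2 ⟨Finset.mem_univ _, rfl⟩
    have hP0 : ∀ x, 0 ≤ P x := by
      intro x
      simp only [hPdef]
      split_ifs <;> [linarith [hP₀0 x, hFnn m]; exact hP₀0 x; exact le_refl 0]
    have hsplit : ∀ f : X → ℝ, ∑ x, f x
        = f x₀ + ∑ x ∈ (Finset.univ.filter (fun x => l x = m)).erase x₀, f x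
          + ∑ x ∈ Finset.univ.filter (fun x => ¬ l x = m), f x := by
      intro f
      rw [← Finset.sum_filter_add_sum_filter_not Finset.univ (fun x => l x = m) f,
        ← Finset.add_sum_erase _ f hx₀mem]
    have hP₀split := hsplit P₀
    rw [hfeq] at hP₀split
    have hsum1 : ∑ x, P x = 1 := by
      rw [hsplit P]
      have e1 : P x₀ = P₀ x₀ + F m := by simp [hPdef, hm]
      have e2 : ∑ x ∈ (Finset.univ.filter (fun x => l x = m)).erase x₀, P x
          = ∑ x ∈ (Finset.univ.filter (fun x => l x = m)).erase x₀, P₀ x := by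
        refine Finset.sum_congr rfl fun x hx => ?_
        obtain ⟨hne, hxm⟩ := Finset.mem_erase.1 hx
        have hlm : l x = m := (Finset.mem_filter.1 hxm).2
        simp [hPdef, hlm, hne]
      have e3 : ∑ x ∈ Finset.univ.filter (fun x => ¬ l x = m), P x = 0 := by
        refine Finset.sum_eq_zero fun x hx => ?_
        have := (Finset.mem_filter.1 hx).2
        simp [hPdef, this]
      rw [e1, e2, e3]
      rw [hP₀split] at hP₀1
      linarith
    have hTV : (∑ x, |P x - P₀ x|) / 2 ≤ ξ := by
      have : ∑ x, |P x - P₀ x| = 2 * F m := by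
        rw [hsplit (fun x => |P x - P₀ x|)]
        have e1 : |P x₀ - P₀ x₀| = F m := by
          simp only [hPdef, if_pos rfl]
          simp [hm, abs_of_nonneg (hFnn (l x₀))]
        have e2 : ∑ x ∈ (Finset.univ.filter (fun x => l x = m)).erase x₀, |P x - P₀ x| = 0 := by
          refine Finset.sum_eq_zero fun x hx => ?_
          obtain ⟨hne, hxm⟩ := Finset.mem_erase.1 hx
          have hlm : l x = m := (Finset.mem_filter.1 hxm).2
          simp [hPdef, hlm, hne]
        have e3 : ∑ x ∈ Finset.univ.filter (fun x => ¬ l x = m), |P x - P₀ x| = F m := by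
          rw [hfeq]
          refine Finset.sum_congr rfl fun x hx => ?_
          have hlm : m < l x := (Finset.mem_filter.1 hx).2
          have : ¬ l x = m := ne_of_gt hlm
          simp [hPdef, this, abs_of_nonpos, hP₀0 x, abs_of_nonneg]
        rw [e1, e2, e3]; ring
      rw [this]; linarith
    have hval : ∑ x, P x * l x = m := by
      have : ∀ x, P x * l x = P x * m := by
        intro x
        by_cases h : l x = m
        · rw [h]
        · simp [hPdef, h]
      calc ∑ x, P x * l x = ∑ x, P x * m := Finset.sum_congr rfl fun x _ => this x
        _ = (∑ x, P x) * m := by rw [Finset.sum_mul]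
        _ = m := by rw [hsum1, one_mul]
    refine build P m hP0 hsum1 hTV ?_
    have hzero : (fun x => max (m - l x) 0) = fun _ => (0:ℝ) :=
      funext fun x => max_eq_right (by linarith [hx₀ x])
    have hsz : ∑ x, P₀ x * max (m - l x) 0 = 0 :=
      Finset.sum_eq_zero fun x _ => by
        rw [max_eq_right (by linarith [hx₀ x] : m - l x ≤ 0), mul_zero]
    rw [hval, hzero, hsz]
    simp
  · push_neg at hcase
    -- Case 2: choose lam as the (1-ξ)-quantile of l under P₀
    have hS₁ : (Finset.univ.filter (fun x => F (l x) ≤ ξ)).Nonempty := by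
      obtain ⟨xM, -, hxM⟩ := Finset.exists_max_image Finset.univ l
        ⟨Classical.arbitrary X, Finset.mem_univ _⟩
      refine ⟨xM, Finset.mem_filter.2 ⟨Finset.mem_univ _, ?_⟩⟩
      have hemp : Finset.univ.filter (fun x => l xM < l x) = ∅ :=
        Finset.filter_eq_empty_iff.2 (fun x _ => not_lt.2 (hxM x (Finset.mem_univ x)))
      have h0 : F (l xM) = 0 := by
        simp only [hFdef]
        rw [hemp, Finset.sum_empty]
      rw [h0]; exact hξ
    set lam := (Finset.univ.filter (fun x => F (l x) ≤ ξ)).inf' hS₁ l with hlamdef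
    obtain ⟨x₁, hx₁mem, hx₁⟩ := Finset.exists_mem_eq_inf' hS₁ l
    have hFlam : F lam ≤ ξ := by
      rw [hlamdef, hx₁]
      exact (Finset.mem_filter.1 hx₁mem).2
    have hlam_le : ∀ x, F (l x) ≤ ξ → lam ≤ l x := fun x hx =>
      Finset.inf'_le l (Finset.mem_filter.2 ⟨Finset.mem_univ _, hx⟩)
    have hFanti : ∀ s t : ℝ, s ≤ t → F t ≤ F s := by
      intro s t hst
      apply Finset.sum_le_sum_of_subset_of_nonneg
      · intro x hx
        simp only [Finset.mem_filter, Finset.mem_univ, true_and] at hx ⊢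
        exact lt_of_le_of_lt hst hx
      · intro x _ _; exact hP₀0 x
    have hmlam : m < lam := by
      by_contra h
      push_neg at h
      have := hFanti lam m h
      linarith
    have hx₀B : x₀ ∈ Finset.univ.filter (fun x => l x < lam) :=
      Finset.mem_filter.2 ⟨Finset.mem_univ _, hmlam⟩
    obtain ⟨y, hymem, hy⟩ := Finset.exists_mem_eq_sup' ⟨x₀, hx₀B⟩ l
    have hylt : l y < lam := (Finset.mem_filter.1 hymem).2
    have hFy : ξ < F (l y) := by
      by_contra h
      push_neg at h
      have := hlam_le y h
      linarith
    have hfeq2 : Finset.univ.filter (fun x => l y < l x)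
        = Finset.univ.filter (fun x => lam ≤ l x) := by
      ext x
      simp only [Finset.mem_filter, Finset.mem_univ, true_and]
      constructor
      · intro h
        by_contra h2
        push_neg at h2
        have hle : l x ≤ (Finset.univ.filter (fun x => l x < lam)).sup' ⟨x₀, hx₀B⟩ l :=
          Finset.le_sup' l (Finset.mem_filter.2 ⟨Finset.mem_univ _, h2⟩)
        rw [hy] at hle
        linarith
      · intro h; linarith
    have hkey : ξ < ∑ x ∈ Finset.univ.filter (fun x => lam ≤ l x), P₀ x := by
      have : F (l y) = ∑ x ∈ Finset.univ.filter (fun x => lam ≤ l x), P₀ x := by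
        simp only [hFdef]
        rw [hfeq2]
      linarith
    set c := ∑ x ∈ Finset.univ.filter (fun x => l x = lam), P₀ x with hcdef
    have hsplitc : ∑ x ∈ Finset.univ.filter (fun x => lam ≤ l x), P₀ x = c + F lam := by
      rw [← Finset.sum_filter_add_sum_filter_not
        (Finset.univ.filter (fun x => lam ≤ l x)) (fun x => l x = lam) P₀]
      congr 1
      · rw [Finset.filter_filter]
        congr 1
        ext x
        simp only [Finset.mem_filter, Finset.mem_univ, true_and]
        exact ⟨fun h => h.2, fun h => ⟨le_of_eq h.symm, h⟩⟩
      · rw [Finset.filter_filter]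
        simp only [hFdef]
        congr 1
        ext x
        simp only [Finset.mem_filter, Finset.mem_univ, true_and]
        exact ⟨fun h => lt_of_le_of_ne h.1 (Ne.symm h.2), fun h => ⟨h.le, ne_of_gt h⟩⟩
    set r := ξ - F lam with hrdef
    have hr0 : 0 ≤ r := by rw [hrdef]; linarith
    have hrc : r < c := by rw [hrdef]; linarith
    have hcpos : 0 < c := lt_of_le_of_lt hr0 hrc
    set P : X → ℝ := fun x => if lam < l x then 0 else if l x = lam then P₀ x * (1 - r / c)
      else if x = x₀ then P₀ x + ξ else P₀ x with hPdef
    have hrc1 : r / c ≤ 1 := (div_le_one hcpos).2 hrc.le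
    have hrcnn : 0 ≤ r / c := div_nonneg hr0 hcpos.le
    have hP0 : ∀ x, 0 ≤ P x := by
      intro x
      simp only [hPdef]
      split_ifs
      · exact le_refl 0
      · exact mul_nonneg (hP₀0 x) (by linarith)
      · linarith [hP₀0 x]
      · exact hP₀0 x
    have hsplit : ∀ f : X → ℝ, ∑ x, f x
        = ∑ x ∈ Finset.univ.filter (fun x => lam < l x), f x
          + ∑ x ∈ Finset.univ.filter (fun x => l x = lam), f x
          + (f x₀ + ∑ x ∈ (Finset.univ.filter (fun x => l x < lam)).erase x₀, f x) := by
      intro f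
      rw [← Finset.sum_filter_add_sum_filter_not Finset.univ (fun x => lam < l x) f]
      have e1 : (Finset.univ.filter (fun x => ¬ lam < l x)).filter (fun x => l x = lam)
          = Finset.univ.filter (fun x => l x = lam) := by
        rw [Finset.filter_filter]
        ext x
        simp only [Finset.mem_filter, Finset.mem_univ, true_and]
        exact ⟨fun h => h.2, fun h => ⟨by rw [h]; exact lt_irrefl lam, h⟩⟩
      have e2 : (Finset.univ.filter (fun x => ¬ lam < l x)).filter (fun x => ¬ l x = lam)
          = Finset.univ.filter (fun x => l x < lam) := by
        rw [Finset.filter_filter]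
        ext x
        simp only [Finset.mem_filter, Finset.mem_univ, true_and]
        exact ⟨fun h => lt_of_le_of_ne (not_lt.1 h.1) h.2, fun h => ⟨not_lt.2 h.le, ne_of_lt h⟩⟩
      rw [← Finset.sum_filter_add_sum_filter_not
        (Finset.univ.filter (fun x => ¬ lam < l x)) (fun x => l x = lam) f, e1, e2,
        ← Finset.add_sum_erase _ f hx₀B]
      ring
    -- facts about P on each region
    have hPx₀ : P x₀ = P₀ x₀ + ξ := by
      have h1 : ¬ lam < l x₀ := not_lt.2 hmlam.le
      have h2 : ¬ l x₀ = lam := ne_of_lt hmlam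
      simp [hPdef, h1, h2]
    have hs₁P : ∀ g : ℝ → ℝ, ∀ x ∈ Finset.univ.filter (fun x => lam < l x), P x = 0 := by
      intro g x hx
      have := (Finset.mem_filter.1 hx).2
      simp [hPdef, this]
    have hs₂Px : ∀ x ∈ Finset.univ.filter (fun x => l x = lam), P x = P₀ x * (1 - r / c) := by
      intro x hx
      have h2 : l x = lam := (Finset.mem_filter.1 hx).2
      have h1 : ¬ lam < l x := by rw [h2]; exact lt_irrefl lam
      simp [hPdef, h1, h2]
    have hs₃Px : ∀ x ∈ (Finset.univ.filter (fun x => l x < lam)).erase x₀, P x = P₀ x := by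
      intro x hx
      obtain ⟨hne, hxm⟩ := Finset.mem_erase.1 hx
      have h3 : l x < lam := (Finset.mem_filter.1 hxm).2
      have h1 : ¬ lam < l x := not_lt.2 h3.le
      have h2 : ¬ l x = lam := ne_of_lt h3
      simp [hPdef, h1, h2, hne]
    have hclam : c * (1 - r / c) = c - r := by field_simp
    have hcr2 : c * (r / c) = r := by field_simp
    -- abbreviations
    set A := F lam with hAdef
    set B := ∑ x ∈ (Finset.univ.filter (fun x => l x < lam)).erase x₀, P₀ x with hBdef
    set E := ∑ x ∈ (Finset.univ.filter (fun x => l x < lam)).erase x₀, P₀ x * l x with hEdef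
    have hP₀split : A + c + (P₀ x₀ + B) = 1 := by
      have := hsplit P₀
      rw [hP₀1] at this
      simp only [hFdef, hAdef, hBdef, hcdef]
      linarith [this]
    have hsum1 : ∑ x, P x = 1 := by
      rw [hsplit P]
      have e1 : ∑ x ∈ Finset.univ.filter (fun x => lam < l x), P x = 0 :=
        Finset.sum_eq_zero (hs₁P id)
      have e2 : ∑ x ∈ Finset.univ.filter (fun x => l x = lam), P x = c - r := by
        rw [Finset.sum_congr rfl hs₂Px, ← Finset.sum_mul, ← hcdef, hclam]
      have e3 : ∑ x ∈ (Finset.univ.filter (fun x => l x < lam)).erase x₀, P x = B := by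
        rw [Finset.sum_congr rfl hs₃Px, ← hBdef]
      rw [e1, e2, e3, hPx₀]
      linarith [hP₀split]
    have hTV : (∑ x, |P x - P₀ x|) / 2 ≤ ξ := by
      have : ∑ x, |P x - P₀ x| = 2 * ξ := by
        rw [hsplit (fun x => |P x - P₀ x|)]
        have e1 : ∑ x ∈ Finset.univ.filter (fun x => lam < l x), |P x - P₀ x| = A := by
          rw [hAdef]
          simp only [hFdef]
          refine Finset.sum_congr rfl fun x hx => ?_
          rw [hs₁P id x hx]
          rw [abs_of_nonpos (by linarith [hP₀0 x])]
          ring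
        have e2 : ∑ x ∈ Finset.univ.filter (fun x => l x = lam), |P x - P₀ x| = r := by
          have : ∀ x ∈ Finset.univ.filter (fun x => l x = lam),
              |P x - P₀ x| = P₀ x * (r / c) := by
            intro x hx
            rw [hs₂Px x hx]
            have : P₀ x * (1 - r / c) - P₀ x = -(P₀ x * (r / c)) := by ring
            rw [this, abs_neg, abs_of_nonneg (mul_nonneg (hP₀0 x) hrcnn)]
          rw [Finset.sum_congr rfl this, ← Finset.sum_mul, ← hcdef, hcr2]
        have e3 : ∑ x ∈ (Finset.univ.filter (fun x => l x < lam)).erase x₀, |P x - P₀ x| = 0 := by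
          refine Finset.sum_eq_zero fun x hx => ?_
          rw [hs₃Px x hx]
          simp
        have e4 : |P x₀ - P₀ x₀| = ξ := by
          rw [hPx₀]
          rw [show P₀ x₀ + ξ - P₀ x₀ = ξ by ring, abs_of_nonneg hξ]
        rw [e1, e2, e3, e4]
        ring
      rw [this]; linarith
    refine build P lam hP0 hsum1 hTV ?_
    -- value equality
    have hsup : Finset.univ.sup' Finset.univ_nonempty (fun x => max (lam - l x) 0)
        = lam - m := by
      apply le_antisymm
      · exact Finset.sup'_le _ _ fun x _ => max_le (by linarith [hx₀ x]) (by linarith)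
      · exact le_trans (le_of_eq (max_eq_left (by linarith)).symm)
          (Finset.le_sup' (fun x => max (lam - l x) 0) (Finset.mem_univ x₀))
    have hmaxsum : ∑ x, P₀ x * max (lam - l x) 0 = P₀ x₀ * (lam - m) + (lam * B - E) := by
      rw [hsplit (fun x => P₀ x * max (lam - l x) 0)]
      have e1 : ∑ x ∈ Finset.univ.filter (fun x => lam < l x), P₀ x * max (lam - l x) 0 = 0 := by
        refine Finset.sum_eq_zero fun x hx => ?_
        have := (Finset.mem_filter.1 hx).2
        rw [max_eq_right (by linarith), mul_zero]
      have e2 : ∑ x ∈ Finset.univ.filter (fun x => l x = lam), P₀ x * max (lam - l x) 0 = 0 := by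
        refine Finset.sum_eq_zero fun x hx => ?_
        have := (Finset.mem_filter.1 hx).2
        rw [max_eq_right (by linarith), mul_zero]
      have e3 : ∑ x ∈ (Finset.univ.filter (fun x => l x < lam)).erase x₀,
          P₀ x * max (lam - l x) 0 = lam * B - E := by
        have : ∀ x ∈ (Finset.univ.filter (fun x => l x < lam)).erase x₀,
            P₀ x * max (lam - l x) 0 = lam * P₀ x - P₀ x * l x := by
          intro x hx
          have h3 : l x < lam := (Finset.mem_filter.1 (Finset.mem_erase.1 hx).2).2
          rw [max_eq_left (by linarith)]
          ring
        rw [Finset.sum_congr rfl this, Finset.sum_sub_distrib, ← Finset.mul_sum,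
          ← hBdef, ← hEdef]
      have e4 : P₀ x₀ * max (lam - l x₀) 0 = P₀ x₀ * (lam - m) := by
        rw [max_eq_left (by linarith)]
      rw [e1, e2, e3, e4]
      ring
    have hvalP : ∑ x, P x * l x = (c - r) * lam + ((P₀ x₀ + ξ) * m + E) := by
      rw [hsplit (fun x => P x * l x)]
      have e1 : ∑ x ∈ Finset.univ.filter (fun x => lam < l x), P x * l x = 0 :=
        Finset.sum_eq_zero fun x hx => by rw [hs₁P id x hx, zero_mul]
      have e2 : ∑ x ∈ Finset.univ.filter (fun x => l x = lam), P x * l x = (c - r) * lam := by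
        have h : ∀ x ∈ Finset.univ.filter (fun x => l x = lam),
            P x * l x = P₀ x * ((1 - r / c) * lam) := by
          intro x hx
          have hl : l x = lam := (Finset.mem_filter.1 hx).2
          rw [hs₂Px x hx, hl]
          ring
        rw [Finset.sum_congr rfl h, ← Finset.sum_mul, ← hcdef, ← mul_assoc, hclam]
      have e3 : ∑ x ∈ (Finset.univ.filter (fun x => l x < lam)).erase x₀, P x * l x = E := by
        rw [Finset.sum_congr rfl (fun x hx => by rw [hs₃Px x hx]), ← hEdef]
      rw [e1, e2, e3, hPx₀]
      ring
    rw [hvalP, hmaxsum, hsup]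
    linear_combination lam * hP₀split - lam * hrdef
end

section
/- Let 𝒳 be a finite nonempty set, P₀ ∈ Δ(𝒳), ℓ : 𝒳 → ℝ, and ξ ≥ 0. Then the infimum of E_P[ℓ] over all P ∈ Δ(𝒳) with KL(P‖P₀) ≤ ξ equals the supremum over λ > 0 of −λ·log E_{P₀}[exp(−ℓ/λ)] − λξ. -/
open scoped BigOperators

/-- The KL divergence between two (finitely supported, real-valued) distributions,
valued in `EReal`: it is `⊤` unless `P` is absolutely continuous w.r.t. `Q`. -/
noncomputable def KLdiv {X : Type*} [Fintype X] (P Q : X → ℝ) : EReal :=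
  if ∀ x, Q x = 0 → P x = 0 then
    (((∑ x, if 0 < P x then P x * Real.log (P x / Q x) else 0) : ℝ) : EReal)
  else ⊤

set_option linter.unusedSectionVars false
set_option maxHeartbeats 1000000

section Aux
variable {X : Type*} [Fintype X] [Nonempty X]

lemma exists_pos (P₀ : X → ℝ) (hP₀0 : ∀ x, 0 ≤ P₀ x) (hP₀1 : ∑ x, P₀ x = 1) :
    ∃ x, 0 < P₀ x := by
  by_contra h
  push_neg at h
  have : ∑ x, P₀ x = 0 := Finset.sum_eq_zero fun x _ => le_antisymm (h x) (hP₀0 x)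
  rw [this] at hP₀1; norm_num at hP₀1

lemma Zpos' (P₀ : X → ℝ) (hP₀0 : ∀ x, 0 ≤ P₀ x) (hP₀1 : ∑ x, P₀ x = 1) (f : X → ℝ) :
    0 < ∑ x, P₀ x * Real.exp (f x) := by
  obtain ⟨x₀, hx₀⟩ := exists_pos P₀ hP₀0 hP₀1
  apply Finset.sum_pos' (fun x _ => mul_nonneg (hP₀0 x) (Real.exp_pos _).le)
  exact ⟨x₀, Finset.mem_univ _, mul_pos hx₀ (Real.exp_pos _)⟩

lemma if_elim' (P : X → ℝ) (hP0 : ∀ x, 0 ≤ P x) (f : X → ℝ) :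
    ∑ x, (if 0 < P x then P x * Real.log (P x / f x) else 0)
      = ∑ x, P x * Real.log (P x / f x) := by
  refine Finset.sum_congr rfl fun x _ => ?_
  by_cases h : 0 < P x
  · simp [h]
  · have : P x = 0 := le_antisymm (not_lt.1 h) (hP0 x)
    simp [h, this]

lemma gibbs' (P Q : X → ℝ) (hP0 : ∀ x, 0 ≤ P x) (hP1 : ∑ x, P x = 1)
    (hQ0 : ∀ x, 0 ≤ Q x) (hQ1 : ∑ x, Q x = 1)
    (hac : ∀ x, 0 < P x → 0 < Q x) :
    0 ≤ ∑ x, P x * Real.log (P x / Q x) := by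
  have key : ∀ x, P x - Q x * (if 0 < P x then 1 else 0) ≤ P x * Real.log (P x / Q x) := by
    intro x
    by_cases h : 0 < P x
    · have hq := hac x h
      have hlog : Real.log (Q x / P x) ≤ Q x / P x - 1 :=
        Real.log_le_sub_one_of_pos (div_pos hq h)
      have : Real.log (Q x / P x) = - Real.log (P x / Q x) := by
        rw [← Real.log_inv]; congr 1; field_simp
      rw [this] at hlog
      have h2 : 1 - Q x / P x ≤ Real.log (P x / Q x) := by linarith
      have h3 := mul_le_mul_of_nonneg_left h2 h.le
      calc P x - Q x * (if 0 < P x then 1 else 0) = P x * (1 - Q x / P x) := by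
            rw [if_pos h]; field_simp
        _ ≤ P x * Real.log (P x / Q x) := h3
    · have hp : P x = 0 := le_antisymm (not_lt.1 h) (hP0 x)
      simp [h, hp]
  have h1 : ∑ x, Q x * (if 0 < P x then 1 else 0) ≤ ∑ x, Q x :=
    Finset.sum_le_sum fun x _ => by
      by_cases h : 0 < P x <;> simp [h, hQ0 x]
  calc (0:ℝ) ≤ ∑ x, P x - ∑ x, Q x * (if 0 < P x then 1 else 0) := by
        rw [hP1]; linarith [hQ1.le, h1]
    _ ≤ ∑ x, P x * Real.log (P x / Q x) := by
        rw [← Finset.sum_sub_distrib]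
        exact Finset.sum_le_sum fun x _ => key x

lemma weak_duality (P₀ : X → ℝ) (hP₀0 : ∀ x, 0 ≤ P₀ x) (hP₀1 : ∑ x, P₀ x = 1)
    (l : X → ℝ) (ξ : ℝ)
    (P : X → ℝ) (hP0 : ∀ x, 0 ≤ P x) (hP1 : ∑ x, P x = 1)
    (hKL : KLdiv P P₀ ≤ (ξ : EReal)) (lam : ℝ) (hlam : 0 < lam) :
    -lam * Real.log (∑ x, P₀ x * Real.exp (-l x / lam)) - lam * ξ ≤ ∑ x, P x * l x := by
  have hac : ∀ x, P₀ x = 0 → P x = 0 := by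
    by_contra h
    rw [KLdiv, if_neg h] at hKL
    simp at hKL
  have hD : (∑ x, P x * Real.log (P x / P₀ x)) ≤ ξ := by
    rw [KLdiv, if_pos hac, if_elim' P hP0 P₀] at hKL
    exact_mod_cast hKL
  set Z := ∑ x, P₀ x * Real.exp (-l x / lam) with hZdef
  have hZ : 0 < Z := Zpos' P₀ hP₀0 hP₀1 _
  set Q : X → ℝ := fun x => P₀ x * Real.exp (-l x / lam) / Z with hQdef
  have hQ0 : ∀ x, 0 ≤ Q x := fun x =>
    div_nonneg (mul_nonneg (hP₀0 x) (Real.exp_pos _).le) hZ.le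
  have hQ1 : ∑ x, Q x = 1 := by
    simp only [hQdef, ← Finset.sum_div]
    exact div_self hZ.ne'
  have hP₀pos : ∀ x, 0 < P x → 0 < P₀ x := fun x hx =>
    (hP₀0 x).lt_of_ne fun h => by
      have := hac x h.symm; rw [this] at hx; exact lt_irrefl 0 hx
  have hacPQ : ∀ x, 0 < P x → 0 < Q x := fun x hx =>
    div_pos (mul_pos (hP₀pos x hx) (Real.exp_pos _)) hZ
  have hg := gibbs' P Q hP0 hP1 hQ0 hQ1 hacPQ
  have hsum : ∑ x, P x * Real.log (P x / Q x)
      = (∑ x, P x * Real.log (P x / P₀ x)) + (∑ x, P x * l x) / lam + Real.log Z := by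
    have term : ∀ x, P x * Real.log (P x / Q x)
        = P x * Real.log (P x / P₀ x) + P x * l x / lam + P x * Real.log Z := by
      intro x
      by_cases hx : 0 < P x
      · have hPx : P x ≠ 0 := hx.ne'
        have hP₀x : (P₀ x) ≠ 0 := (hP₀pos x hx).ne'
        have hQx : Q x ≠ 0 := (hacPQ x hx).ne'
        have hE : Real.exp (-l x / lam) ≠ 0 := (Real.exp_pos _).ne'
        have hlogQ : Real.log (Q x) = Real.log (P₀ x) + (-l x / lam) - Real.log Z := by
          rw [hQdef]
          rw [Real.log_div (mul_ne_zero hP₀x hE) hZ.ne', Real.log_mul hP₀x hE,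
            Real.log_exp]
        rw [Real.log_div hPx hQx, Real.log_div hPx hP₀x, hlogQ]
        ring
      · have : P x = 0 := le_antisymm (not_lt.1 hx) (hP0 x)
        simp [this]
    rw [Finset.sum_congr rfl fun x _ => term x]
    rw [Finset.sum_add_distrib, Finset.sum_add_distrib, ← Finset.sum_div,
      ← Finset.sum_mul, hP1, one_mul]
  rw [hsum] at hg
  have h2 : 0 ≤ lam * ((∑ x, P x * Real.log (P x / P₀ x)) + (∑ x, P x * l x) / lam
      + Real.log Z) := mul_nonneg hlam.le hg
  rw [mul_add, mul_add, mul_div_cancel₀ _ hlam.ne'] at h2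
  have h3 : lam * (∑ x, P x * Real.log (P x / P₀ x)) ≤ lam * ξ :=
    mul_le_mul_of_nonneg_left hD hlam.le
  linarith

lemma pt_sum (P₀ : X → ℝ) (hP₀0 : ∀ x, 0 ≤ P₀ x) (hP₀1 : ∑ x, P₀ x = 1)
    (l : X → ℝ) (lam : ℝ) (Z : ℝ) (hZdef : Z = ∑ x, P₀ x * Real.exp (-l x / lam)) :
    ∑ x, P₀ x * Real.exp (-l x / lam) / Z = 1 := by
  have hZ : 0 < Z := hZdef ▸ Zpos' P₀ hP₀0 hP₀1 _
  rw [← Finset.sum_div, ← hZdef]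
  exact div_self hZ.ne'

lemma pt_avg (P₀ : X → ℝ) (l : X → ℝ) (lam : ℝ) (Z : ℝ) :
    ∑ x, (P₀ x * Real.exp (-l x / lam) / Z) * l x
      = (∑ x, P₀ x * l x * Real.exp (-l x / lam)) / Z := by
  rw [Finset.sum_div]
  exact Finset.sum_congr rfl fun x _ => by ring

lemma kl_tilt (P₀ : X → ℝ) (hP₀0 : ∀ x, 0 ≤ P₀ x) (hP₀1 : ∑ x, P₀ x = 1)
    (l : X → ℝ) (lam : ℝ) (hlam : 0 < lam)
    (Z : ℝ) (hZdef : Z = ∑ x, P₀ x * Real.exp (-l x / lam)) :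
    KLdiv (fun x => P₀ x * Real.exp (-l x / lam) / Z) P₀
      = ((-(∑ x, P₀ x * l x * Real.exp (-l x / lam)) / (lam * Z) - Real.log Z : ℝ)
          : EReal) := by
  have hZ : 0 < Z := hZdef ▸ Zpos' P₀ hP₀0 hP₀1 _
  set Pt : X → ℝ := fun x => P₀ x * Real.exp (-l x / lam) / Z with hPt
  have hPt0 : ∀ x, 0 ≤ Pt x := fun x =>
    div_nonneg (mul_nonneg (hP₀0 x) (Real.exp_pos _).le) hZ.le
  have cond : ∀ x, P₀ x = 0 → Pt x = 0 := by
    intro x hx; simp [hPt, hx]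
  rw [KLdiv, if_pos cond, if_elim' Pt hPt0 P₀]
  norm_cast
  have term : ∀ x, Pt x * Real.log (Pt x / P₀ x)
      = -(P₀ x * l x * Real.exp (-l x / lam)) / (lam * Z) - Pt x * Real.log Z := by
    intro x
    by_cases hx : P₀ x = 0
    · simp [hPt, hx]
    · have hxpos : 0 < P₀ x := (hP₀0 x).lt_of_ne (Ne.symm hx)
      have hE : Real.exp (-l x / lam) ≠ 0 := (Real.exp_pos _).ne'
      have h1 : Pt x / P₀ x = Real.exp (-l x / lam) / Z := by
        rw [hPt]; field_simp
      rw [h1, Real.log_div hE hZ.ne', Real.log_exp, hPt]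
      field_simp
  rw [Finset.sum_congr rfl fun x _ => term x, Finset.sum_sub_distrib,
    ← Finset.sum_mul, pt_sum P₀ hP₀0 hP₀1 l lam Z hZdef, one_mul,
    ← Finset.sum_div, ← Finset.sum_neg_distrib]

lemma g_upper (P₀ : X → ℝ) (hP₀0 : ∀ x, 0 ≤ P₀ x) (hP₀1 : ∑ x, P₀ x = 1)
    (l : X → ℝ) (C : ℝ) (hC : ∀ x, |l x| ≤ C) (lam : ℝ) (hlam : 0 < lam)
    (Z : ℝ) (hZdef : Z = ∑ x, P₀ x * Real.exp (-l x / lam))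
    (Ef : ℝ) (hEfdef : Ef = ∑ x, P₀ x * l x * Real.exp (-l x / lam)) :
    -Ef / (lam * Z) - Real.log Z ≤ 2 * C / lam := by
  have hZ : 0 < Z := hZdef ▸ Zpos' P₀ hP₀0 hP₀1 _
  have hEf : -C * Z ≤ Ef := by
    rw [hEfdef, hZdef, Finset.mul_sum]
    refine Finset.sum_le_sum fun x _ => ?_
    have h1 : -C ≤ l x := neg_le_of_abs_le (hC x)
    have h2 : 0 ≤ P₀ x * Real.exp (-l x / lam) :=
      mul_nonneg (hP₀0 x) (Real.exp_pos _).le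
    calc -C * (P₀ x * Real.exp (-l x / lam)) = -C * P₀ x * Real.exp (-l x / lam) := by
          ring
      _ ≤ P₀ x * l x * Real.exp (-l x / lam) := by
          apply mul_le_mul_of_nonneg_right _ (Real.exp_pos _).le
          calc -C * P₀ x = P₀ x * (-C) := by ring
            _ ≤ P₀ x * l x := mul_le_mul_of_nonneg_left h1 (hP₀0 x)
  have hZlb : Real.exp (-C / lam) ≤ Z := by
    rw [hZdef]
    calc Real.exp (-C / lam) = ∑ x, P₀ x * Real.exp (-C / lam) := by
          rw [← Finset.sum_mul, hP₀1, one_mul]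
      _ ≤ ∑ x, P₀ x * Real.exp (-l x / lam) := by
          refine Finset.sum_le_sum fun x _ => ?_
          apply mul_le_mul_of_nonneg_left _ (hP₀0 x)
          apply Real.exp_le_exp.2
          apply div_le_div_of_nonneg_right _ hlam.le
          linarith [le_of_abs_le (hC x)]
  have hlog : -C / lam ≤ Real.log Z := by
    calc -C / lam = Real.log (Real.exp (-C / lam)) := (Real.log_exp _).symm
      _ ≤ Real.log Z := Real.log_le_log (Real.exp_pos _) hZlb
  have h1 : -Ef / (lam * Z) ≤ C / lam := by
    rw [div_le_div_iff₀ (mul_pos hlam hZ) hlam]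
    have h1' : -Ef ≤ C * Z := by linarith
    have h1'' := mul_le_mul_of_nonneg_right h1' hlam.le
    nlinarith
  have : -Real.log Z ≤ C / lam := by
    have := neg_le_neg hlog
    calc -Real.log Z ≤ -(-C / lam) := this
      _ = C / lam := by ring
  calc -Ef / (lam * Z) - Real.log Z ≤ C / lam + C / lam := by linarith
    _ = 2 * C / lam := by ring

lemma exp_neg_le (δ lam : ℝ) (hδ : 0 < δ) (hlam : 0 < lam) :
    Real.exp (-(δ / lam)) ≤ 4 * lam ^ 2 / δ ^ 2 := by
  set t := δ / lam with ht
  have htpos : 0 < t := div_pos hδ hlam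
  have h1 : (t / 2) ^ 2 ≤ Real.exp t := by
    have h3 : (t / 2) ^ 2 ≤ (1 + t / 2) ^ 2 :=
      pow_le_pow_left₀ (by positivity) (by linarith) 2
    have h5 : (1 + t / 2) ^ 2 ≤ (Real.exp (t / 2)) ^ 2 :=
      pow_le_pow_left₀ (by positivity) (by linarith [Real.add_one_le_exp (t/2)]) 2
    have h6 : (Real.exp (t / 2)) ^ 2 = Real.exp t := by
      rw [← Real.exp_nat_mul]
      congr 1
      push_cast
      ring
    linarith
  rw [Real.exp_neg]
  calc (Real.exp t)⁻¹ ≤ ((t / 2) ^ 2)⁻¹ := inv_anti₀ (by positivity) h1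
    _ = 4 * lam ^ 2 / δ ^ 2 := by
      rw [ht]; field_simp; ring

lemma g_lower (P₀ : X → ℝ) (hP₀0 : ∀ x, 0 ≤ P₀ x) (hP₀1 : ∑ x, P₀ x = 1)
    (l : X → ℝ) (C : ℝ) (hC : ∀ x, |l x| ≤ C)
    (m : ℝ) (hm_le : ∀ x, 0 < P₀ x → m ≤ l x) (hm_abs : |m| ≤ C)
    (M : Finset X) (hM : ∀ x, x ∈ M ↔ (0 < P₀ x ∧ l x = m))
    (p : ℝ) (hpdef : p = ∑ x ∈ M, P₀ x) (hp : 0 < p)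
    (δ : ℝ) (hδ : 0 < δ) (hδle : ∀ x, 0 < P₀ x → l x ≠ m → δ ≤ l x - m)
    (lam : ℝ) (h0 : 0 < lam) (h1 : lam ≤ 1)
    (Z : ℝ) (hZdef : Z = ∑ x, P₀ x * Real.exp (-l x / lam))
    (Ef : ℝ) (hEfdef : Ef = ∑ x, P₀ x * l x * Real.exp (-l x / lam)) :
    -Real.log p - (8 * C + 4) * lam / (p * δ ^ 2) ≤ -Ef / (lam * Z) - Real.log Z := by
  classical
  have hC0 : 0 ≤ C := le_trans (abs_nonneg _) (hC (Classical.arbitrary X))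
  set ee := Real.exp (-(δ / lam)) with hee
  have hee0 : 0 < ee := Real.exp_pos _
  set W := ∑ x, P₀ x * Real.exp (-(l x - m) / lam) with hWdef
  set V := ∑ x, P₀ x * (l x - m) * Real.exp (-(l x - m) / lam) with hVdef
  have hexpsplit : ∀ x, Real.exp (-l x / lam)
      = Real.exp (-m / lam) * Real.exp (-(l x - m) / lam) := by
    intro x
    rw [← Real.exp_add]
    congr 1
    field_simp
    ring
  have hZW : Z = Real.exp (-m / lam) * W := by
    rw [hZdef, hWdef, Finset.mul_sum]
    exact Finset.sum_congr rfl fun x _ => by rw [hexpsplit x]; ring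
  have hEfW : Ef = Real.exp (-m / lam) * (m * W + V) := by
    rw [hEfdef, hWdef, hVdef, mul_add, Finset.mul_sum, Finset.mul_sum, Finset.mul_sum,
      ← Finset.sum_add_distrib]
    exact Finset.sum_congr rfl fun x _ => by rw [hexpsplit x]; ring
  have hWp : p ≤ W := by
    rw [hpdef, hWdef]
    calc ∑ x ∈ M, P₀ x = ∑ x ∈ M, P₀ x * Real.exp (-(l x - m) / lam) := by
          refine Finset.sum_congr rfl fun x hx => ?_
          rw [(hM x).1 hx |>.2]
          simp
      _ ≤ ∑ x, P₀ x * Real.exp (-(l x - m) / lam) :=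
          Finset.sum_le_sum_of_subset_of_nonneg (Finset.subset_univ M)
            fun x _ _ => mul_nonneg (hP₀0 x) (Real.exp_pos _).le
  have hW0 : 0 < W := lt_of_lt_of_le hp hWp
  have hWub : W ≤ p + ee := by
    have hsplit : (∑ x ∈ Finset.univ \ M, P₀ x * Real.exp (-(l x - m) / lam))
        + ∑ x ∈ M, P₀ x * Real.exp (-(l x - m) / lam) = W := by
      rw [hWdef]
      exact Finset.sum_sdiff (Finset.subset_univ M)
    have hMpart : (∑ x ∈ M, P₀ x * Real.exp (-(l x - m) / lam)) = p := by
      rw [hpdef]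
      refine Finset.sum_congr rfl fun x hx => ?_
      rw [(hM x).1 hx |>.2]
      simp
    have hcpart : (∑ x ∈ Finset.univ \ M, P₀ x * Real.exp (-(l x - m) / lam)) ≤ ee := by
      calc (∑ x ∈ Finset.univ \ M, P₀ x * Real.exp (-(l x - m) / lam)) ≤ ∑ x ∈ Finset.univ \ M, P₀ x * ee := by
            refine Finset.sum_le_sum fun x hx => ?_
            by_cases hx0 : 0 < P₀ x
            · have hne : l x ≠ m := fun h => (Finset.mem_sdiff.1 hx).2 ((hM x).2 ⟨hx0, h⟩)
              have hd := hδle x hx0 hne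
              refine mul_le_mul_of_nonneg_left ?_ (hP₀0 x)
              apply Real.exp_le_exp.2
              rw [neg_div, neg_le_neg_iff]
              exact div_le_div_of_nonneg_right (by linarith) h0.le
            · have : P₀ x = 0 := le_antisymm (not_lt.1 hx0) (hP₀0 x)
              simp [this]
        _ = (∑ x ∈ Finset.univ \ M, P₀ x) * ee := by rw [Finset.sum_mul]
        _ ≤ 1 * ee := by
            refine mul_le_mul_of_nonneg_right ?_ hee0.le
            rw [← hP₀1]
            exact Finset.sum_le_sum_of_subset_of_nonneg (Finset.subset_univ _)
              fun x _ _ => hP₀0 x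
        _ = ee := one_mul _
    linarith
  have hV0 : 0 ≤ V := by
    rw [hVdef]
    refine Finset.sum_nonneg fun x _ => ?_
    by_cases hx0 : 0 < P₀ x
    · exact mul_nonneg (mul_nonneg (hP₀0 x) (by linarith [hm_le x hx0]))
        (Real.exp_pos _).le
    · have : P₀ x = 0 := le_antisymm (not_lt.1 hx0) (hP₀0 x)
      simp [this]
  have hVub : V ≤ 2 * C * ee := by
    rw [hVdef]
    calc ∑ x, P₀ x * (l x - m) * Real.exp (-(l x - m) / lam)
        ≤ ∑ x, P₀ x * (2 * C) * ee := by
          refine Finset.sum_le_sum fun x _ => ?_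
          by_cases hx0 : 0 < P₀ x
          · by_cases hxm : l x = m
            · rw [hxm]
              simp only [sub_self, mul_zero, zero_mul]
              positivity
            · have hd := hδle x hx0 hxm
              have hub : l x - m ≤ 2 * C := by
                have h9 := abs_le.1 (hC x)
                have h10 := abs_le.1 hm_abs
                linarith
              have heb : Real.exp (-(l x - m) / lam) ≤ ee := by
                apply Real.exp_le_exp.2
                rw [neg_div, neg_le_neg_iff]
                exact div_le_div_of_nonneg_right (by linarith) h0.le
              refine mul_le_mul (mul_le_mul_of_nonneg_left hub (hP₀0 x)) heb
                (Real.exp_pos _).le (by positivity)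
          · have h11 : P₀ x = 0 := le_antisymm (not_lt.1 hx0) (hP₀0 x)
            rw [h11]
            simp
      _ = 2 * C * ee := by
          have h12 : ∑ x, P₀ x * (2 * C) * ee = (∑ x, P₀ x) * (2 * C * ee) := by
            rw [Finset.sum_mul]
            exact Finset.sum_congr rfl fun x _ => by ring
          rw [h12, hP₀1, one_mul]
  have hEexp : (0:ℝ) < Real.exp (-m / lam) := Real.exp_pos _
  have hgW : -Ef / (lam * Z) - Real.log Z = -(V / (lam * W)) - Real.log W := by
    rw [hZW, hEfW, Real.log_mul hEexp.ne' hW0.ne', Real.log_exp]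
    have hq : -(Real.exp (-m / lam) * (m * W + V)) / (lam * (Real.exp (-m / lam) * W))
        = -m / lam + -(V / (lam * W)) := by
      rw [div_eq_iff (by positivity)]
      field_simp
      ring
    rw [hq]
    ring
  rw [hgW]
  have heebound : ee ≤ 4 * lam ^ 2 / δ ^ 2 := hee ▸ exp_neg_le δ lam hδ h0
  have hb' : ee * δ ^ 2 ≤ 4 * lam ^ 2 := by
    rw [← le_div_iff₀ (by positivity)]
    exact heebound
  have hlam2 : lam ^ 2 ≤ lam := by nlinarith
  have hterm1 : V / (lam * W) ≤ (2 * C * ee) / (lam * p) :=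
    div_le_div₀ (by positivity) hVub (by positivity)
      (mul_le_mul_of_nonneg_left hWp h0.le)
  have hterm2 : Real.log W ≤ Real.log p + ee / p := by
    have h4 : Real.log W ≤ Real.log (p + ee) := Real.log_le_log hW0 hWub
    have h5 : Real.log (p + ee) - Real.log p = Real.log ((p + ee) / p) :=
      (Real.log_div (by positivity) hp.ne').symm
    have h6 : Real.log ((p + ee) / p) ≤ (p + ee) / p - 1 :=
      Real.log_le_sub_one_of_pos (by positivity)
    have h7 : (p + ee) / p - 1 = ee / p := by field_simp; ring
    linarith
  have hee2 : ee / p ≤ 4 * lam / (p * δ ^ 2) := by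
    rw [div_le_div_iff₀ hp (by positivity)]
    calc ee * (p * δ ^ 2) = p * (ee * δ ^ 2) := by ring
      _ ≤ p * (4 * lam ^ 2) := mul_le_mul_of_nonneg_left hb' hp.le
      _ ≤ p * (4 * lam) := mul_le_mul_of_nonneg_left (by nlinarith) hp.le
      _ = 4 * lam * p := by ring
  have hee3 : (2 * C * ee) / (lam * p) ≤ 8 * C * lam / (p * δ ^ 2) := by
    rw [div_le_div_iff₀ (by positivity) (by positivity)]
    calc 2 * C * ee * (p * δ ^ 2) = 2 * C * p * (ee * δ ^ 2) := by ring
      _ ≤ 2 * C * p * (4 * lam ^ 2) :=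
          mul_le_mul_of_nonneg_left hb' (by positivity)
      _ = 8 * C * lam * (lam * p) := by ring
  have hsplitfrac : (8 * C + 4) * lam / (p * δ ^ 2)
      = 8 * C * lam / (p * δ ^ 2) + 4 * lam / (p * δ ^ 2) := by ring
  linarith [hterm1.trans hee3, hterm2, hee2]

lemma g_cont (P₀ : X → ℝ) (hP₀0 : ∀ x, 0 ≤ P₀ x) (hP₀1 : ∑ x, P₀ x = 1)
    (l : X → ℝ) (a b : ℝ) (ha : 0 < a) :
    ContinuousOn (fun t =>
      -(∑ x, P₀ x * l x * Real.exp (-l x / t))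
          / (t * (∑ x, P₀ x * Real.exp (-l x / t)))
        - Real.log (∑ x, P₀ x * Real.exp (-l x / t))) (Set.Icc a b) := by
  have hpos : ∀ t ∈ Set.Icc a b, (0:ℝ) < t := fun t ht => lt_of_lt_of_le ha ht.1
  have hne : ∀ t ∈ Set.Icc a b, t ≠ 0 := fun t ht => (hpos t ht).ne'
  have hterm : ∀ c : X → ℝ, ContinuousOn
      (fun t => ∑ x, c x * Real.exp (-l x / t)) (Set.Icc a b) := by
    intro c
    apply continuousOn_finset_sum
    intro x _
    exact continuousOn_const.mul
      (Real.continuous_exp.comp_continuousOn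
        (continuousOn_const.div continuousOn_id hne))
  have hZc := hterm P₀
  have hEc := hterm (fun x => P₀ x * l x)
  have hZne : ∀ t ∈ Set.Icc a b, (∑ x, P₀ x * Real.exp (-l x / t)) ≠ 0 :=
    fun t ht => (Zpos' P₀ hP₀0 hP₀1 _).ne'
  exact ((hEc.neg).div (continuousOn_id.mul hZc)
      fun t ht => mul_ne_zero (hne t ht) (hZne t ht)).sub (hZc.log hZne)

end Aux

theorem stmt1 {X : Type*} [Fintype X] [Nonempty X]
    (P₀ : X → ℝ) (hP₀0 : ∀ x, 0 ≤ P₀ x) (hP₀1 : ∑ x, P₀ x = 1)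
    (l : X → ℝ) (ξ : ℝ) (hξ : 0 ≤ ξ) :
    sInf {w : ℝ | ∃ P : X → ℝ, (∀ x, 0 ≤ P x) ∧ (∑ x, P x = 1) ∧
        KLdiv P P₀ ≤ (ξ : EReal) ∧ w = ∑ x, P x * l x}
      = sSup {w : ℝ | ∃ lam : ℝ, 0 < lam ∧
        w = -lam * Real.log (∑ x, P₀ x * Real.exp (-l x / lam)) - lam * ξ} := by
  classical
  set A := {w : ℝ | ∃ P : X → ℝ, (∀ x, 0 ≤ P x) ∧ (∑ x, P x = 1) ∧
        KLdiv P P₀ ≤ (ξ : EReal) ∧ w = ∑ x, P x * l x} with hA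
  set B := {w : ℝ | ∃ lam : ℝ, 0 < lam ∧
        w = -lam * Real.log (∑ x, P₀ x * Real.exp (-l x / lam)) - lam * ξ} with hB
  obtain ⟨C, hC⟩ : ∃ C : ℝ, ∀ x, |l x| ≤ C :=
    ⟨Finset.univ.sup' Finset.univ_nonempty (fun x => |l x|),
      fun x => Finset.le_sup' (fun y => |l y|) (Finset.mem_univ x)⟩
  have hC0 : 0 ≤ C := le_trans (abs_nonneg _) (hC (Classical.arbitrary X))
  have hself : KLdiv P₀ P₀ ≤ (ξ : EReal) := by
    rw [KLdiv, if_pos (fun x h => h)]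
    have hz : (∑ x, if 0 < P₀ x then P₀ x * Real.log (P₀ x / P₀ x) else 0) = 0 := by
      refine Finset.sum_eq_zero fun x _ => ?_
      by_cases h : 0 < P₀ x
      · rw [if_pos h, div_self h.ne', Real.log_one, mul_zero]
      · rw [if_neg h]
    rw [hz]
    exact_mod_cast hξ
  have hAmem₀ : (∑ x, P₀ x * l x) ∈ A := ⟨P₀, hP₀0, hP₀1, hself, rfl⟩
  have hAne : A.Nonempty := ⟨_, hAmem₀⟩
  have hBne : B.Nonempty := ⟨_, 1, one_pos, rfl⟩
  have hBddA : BddBelow A := by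
    refine ⟨-C, fun a ha => ?_⟩
    obtain ⟨P, h0, h1, _, rfl⟩ := ha
    calc -C = ∑ x, P x * (-C) := by rw [← Finset.sum_mul, h1, one_mul]
      _ ≤ ∑ x, P x * l x := Finset.sum_le_sum fun x _ =>
          mul_le_mul_of_nonneg_left (neg_le_of_abs_le (hC x)) (h0 x)
  have hkey : ∀ a ∈ A, ∀ b ∈ B, b ≤ a := by
    rintro a ⟨P, h0, h1, hk, rfl⟩ b ⟨lam, hlam, rfl⟩
    exact weak_duality P₀ hP₀0 hP₀1 l ξ P h0 h1 hk lam hlam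
  have hBddB : BddAbove B := ⟨∑ x, P₀ x * l x, fun b hb => hkey _ hAmem₀ b hb⟩
  refine le_antisymm ?_ (csSup_le hBne fun b hb => le_csInf hAne fun a ha =>
    hkey a ha b hb)
  -- Hard direction : sInf A ≤ sSup B
  rcases eq_or_lt_of_le hξ with hξ0 | hξpos
  · -- case ξ = 0
    apply le_of_forall_pos_le_add
    intro ε hε
    set a₀ := ∑ x, P₀ x * l x with ha₀
    set lam := max (max C 1) (C ^ 2 / ε) with hlamdef
    have hlam1 : (1:ℝ) ≤ lam := le_trans (le_max_right C 1) (le_max_left _ _)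
    have hlam0 : (0:ℝ) < lam := lt_of_lt_of_le one_pos hlam1
    have hClam : C ≤ lam := le_trans (le_max_left C 1) (le_max_left _ _)
    have hC2lam : C ^ 2 / ε ≤ lam := le_max_right _ _
    set Z := ∑ x, P₀ x * Real.exp (-l x / lam) with hZdef
    have hZ : 0 < Z := Zpos' P₀ hP₀0 hP₀1 _
    have hZub : Z ≤ 1 - a₀ / lam + C ^ 2 / lam ^ 2 := by
      have step : ∀ x, P₀ x * Real.exp (-l x / lam)
          ≤ P₀ x * (1 + (-l x / lam) + C ^ 2 / lam ^ 2) := by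
        intro x
        refine mul_le_mul_of_nonneg_left ?_ (hP₀0 x)
        have hu : |(-l x / lam)| ≤ 1 := by
          rw [abs_div, abs_neg, abs_of_pos hlam0, div_le_one hlam0]
          exact (hC x).trans hClam
        have h2 := (abs_le.1 (Real.abs_exp_sub_one_sub_id_le hu)).2
        have h3 : (-l x / lam) ^ 2 ≤ C ^ 2 / lam ^ 2 := by
          have e1 : (-l x / lam) ^ 2 = (l x) ^ 2 / lam ^ 2 := by ring
          have e2 : (l x) ^ 2 ≤ C ^ 2 := sq_le_sq' (abs_le.1 (hC x)).1 (abs_le.1 (hC x)).2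
          rw [e1]
          exact div_le_div_of_nonneg_right e2 (by positivity) |>.trans_eq rfl
        linarith
      calc Z ≤ ∑ x, P₀ x * (1 + (-l x / lam) + C ^ 2 / lam ^ 2) :=
            Finset.sum_le_sum fun x _ => step x
        _ = 1 - a₀ / lam + C ^ 2 / lam ^ 2 := by
            have e3 : ∑ x, P₀ x * (1 + (-l x / lam) + C ^ 2 / lam ^ 2)
                = ∑ x, (P₀ x + (P₀ x * l x) * (-1 / lam) + P₀ x * (C ^ 2 / lam ^ 2)) :=
              Finset.sum_congr rfl fun x _ => by ring
            rw [e3, Finset.sum_add_distrib, Finset.sum_add_distrib, ← Finset.sum_mul,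
              ← Finset.sum_mul, hP₀1, ← ha₀]
            field_simp
            ring
    have hlogZ : Real.log Z ≤ -(a₀ / lam) + C ^ 2 / lam ^ 2 :=
      (Real.log_le_sub_one_of_pos hZ).trans (by linarith)
    have hb : (-lam * Real.log Z - lam * ξ) ∈ B := ⟨lam, hlam0, by rw [hZdef]⟩
    have h8 : C ^ 2 / lam ≤ ε := by
      rw [div_le_iff₀ hlam0]
      have h81 := mul_le_mul_of_nonneg_left hC2lam hε.le
      have h82 : ε * (C ^ 2 / ε) = C ^ 2 := by field_simp
      linarith [h81, h82.symm.le]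
    have hmain : a₀ ≤ -lam * Real.log Z - lam * ξ + ε := by
      have h6 := mul_le_mul_of_nonneg_left hlogZ hlam0.le
      have h7 : lam * (-(a₀ / lam) + C ^ 2 / lam ^ 2) = -a₀ + C ^ 2 / lam := by
        field_simp
      rw [← hξ0]
      have h9 : lam * Real.log Z ≤ -a₀ + ε := by
        calc lam * Real.log Z ≤ lam * (-(a₀ / lam) + C ^ 2 / lam ^ 2) := h6
          _ = -a₀ + C ^ 2 / lam := h7
          _ ≤ -a₀ + ε := by linarith
      linarith
    calc sInf A ≤ a₀ := csInf_le hBddA hAmem₀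
      _ ≤ (-lam * Real.log Z - lam * ξ) + ε := hmain
      _ ≤ sSup B + ε := add_le_add_left (le_csSup hBddB hb) ε
  · -- case 0 < ξ
    set sF := Finset.univ.filter (fun x => 0 < P₀ x) with hsF
    have hsne : sF.Nonempty := by
      obtain ⟨x, hx⟩ := exists_pos P₀ hP₀0 hP₀1
      exact ⟨x, by simp [hsF, hx]⟩
    set m := sF.inf' hsne l with hmdef
    have hm_le : ∀ x, 0 < P₀ x → m ≤ l x := fun x hx =>
      Finset.inf'_le _ (by simp [hsF, hx])
    obtain ⟨x₁, hx₁s, hx₁⟩ := Finset.exists_mem_eq_inf' hsne l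
    have hx₁pos : 0 < P₀ x₁ := by
      simpa [hsF] using hx₁s
    have hm_abs : |m| ≤ C := by rw [hmdef, hx₁]; exact hC x₁
    set M := sF.filter (fun x => l x = m) with hMdef
    have hM : ∀ x, x ∈ M ↔ (0 < P₀ x ∧ l x = m) := fun x => by
      simp [hMdef, hsF, Finset.mem_filter, and_assoc]
    have hx₁M : x₁ ∈ M := (hM x₁).2 ⟨hx₁pos, hx₁.symm⟩
    set p := ∑ x ∈ M, P₀ x with hpdef
    have hp : 0 < p :=
      Finset.sum_pos' (fun x hx => hP₀0 x) ⟨x₁, hx₁M, hx₁pos⟩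
    have hp1 : p ≤ 1 := by
      rw [hpdef, ← hP₀1]
      exact Finset.sum_le_sum_of_subset_of_nonneg (Finset.subset_univ M)
        fun x _ _ => hP₀0 x
    by_cases hcase : -Real.log p ≤ ξ
    · -- case (i) : κ ≤ ξ
      apply le_of_forall_pos_le_add
      intro ε hε
      set Q : X → ℝ := fun x => if x ∈ M then P₀ x / p else 0 with hQdef
      have hQ0 : ∀ x, 0 ≤ Q x := fun x => by
        by_cases h : x ∈ M
        · simp [hQdef, h, div_nonneg (hP₀0 x) hp.le]
        · simp [hQdef, h]
      have hsumQ : ∀ f : X → ℝ, ∑ x, Q x * f x = ∑ x ∈ M, (P₀ x / p) * f x := by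
        intro f
        rw [Finset.sum_congr rfl (fun x _ => show Q x * f x
          = if x ∈ M then (P₀ x / p) * f x else 0 from by
            by_cases h : x ∈ M <;> simp [hQdef, h])]
        rw [Finset.sum_ite_mem, Finset.univ_inter]
      have hQ1 : ∑ x, Q x = 1 := by
        have := hsumQ (fun _ => 1)
        simp only [mul_one] at this
        rw [this, ← Finset.sum_div, ← hpdef, div_self hp.ne']
      have hQKL : KLdiv Q P₀ ≤ (ξ : EReal) := by
        have cond : ∀ x, P₀ x = 0 → Q x = 0 := by
          intro x hx
          have : x ∉ M := fun h => by
            have := ((hM x).1 h).1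
            rw [hx] at this
            exact lt_irrefl 0 this
          simp [hQdef, this]
        rw [KLdiv, if_pos cond, if_elim' Q hQ0 P₀]
        have hval : ∑ x, Q x * Real.log (Q x / P₀ x) = -Real.log p := by
          have e4 : ∀ x, Q x * Real.log (Q x / P₀ x)
              = Q x * (-Real.log p) := by
            intro x
            by_cases h : x ∈ M
            · have hpos := ((hM x).1 h).1
              have e5 : Q x / P₀ x = 1 / p := by
                rw [hQdef]
                simp only [h, if_true]
                rw [div_right_comm, div_self hpos.ne']
              rw [e5, one_div, Real.log_inv]
            · simp [hQdef, h]
          rw [Finset.sum_congr rfl fun x _ => e4 x, ← Finset.sum_mul, hQ1, one_mul]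
        rw [hval]
        exact_mod_cast hcase
      have haQ : (∑ x, Q x * l x) ∈ A := ⟨Q, hQ0, hQ1, hQKL, rfl⟩
      have haQval : ∑ x, Q x * l x = m := by
        rw [hsumQ l]
        have e6 : ∀ x ∈ M, (P₀ x / p) * l x = (P₀ x / p) * m := fun x hx => by
          rw [((hM x).1 hx).2]
        rw [Finset.sum_congr rfl e6, ← Finset.sum_mul, ← Finset.sum_div, ← hpdef,
          div_self hp.ne', one_mul]
      set lam := ε / (ξ + 1) with hlamdef
      have hlam0 : 0 < lam := div_pos hε (by linarith)
      set Z := ∑ x, P₀ x * Real.exp (-l x / lam) with hZdef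
      have hZ : 0 < Z := Zpos' P₀ hP₀0 hP₀1 _
      have hZub : Z ≤ Real.exp (-m / lam) := by
        calc Z ≤ ∑ x, P₀ x * Real.exp (-m / lam) := by
              refine Finset.sum_le_sum fun x _ => ?_
              by_cases hx : 0 < P₀ x
              · refine mul_le_mul_of_nonneg_left ?_ (hP₀0 x)
                apply Real.exp_le_exp.2
                rw [neg_div, neg_div, neg_le_neg_iff]
                exact div_le_div_of_nonneg_right (hm_le x hx) hlam0.le
              · have : P₀ x = 0 := le_antisymm (not_lt.1 hx) (hP₀0 x)
                simp [this]
          _ = Real.exp (-m / lam) := by rw [← Finset.sum_mul, hP₀1, one_mul]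
      have hlogZ : Real.log Z ≤ -m / lam := by
        calc Real.log Z ≤ Real.log (Real.exp (-m / lam)) := Real.log_le_log hZ hZub
          _ = -m / lam := Real.log_exp _
      have hb : (-lam * Real.log Z - lam * ξ) ∈ B := ⟨lam, hlam0, by rw [hZdef]⟩
      have hlamξ : lam * ξ ≤ ε := by
        rw [hlamdef, div_mul_eq_mul_div, div_le_iff₀ (by linarith : (0:ℝ) < ξ + 1)]
        nlinarith
      have hmb : m ≤ (-lam * Real.log Z - lam * ξ) + ε := by
        have h10 := mul_le_mul_of_nonneg_left hlogZ hlam0.le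
        have h11 : lam * (-m / lam) = -m := by
          field_simp
        nlinarith
      calc sInf A ≤ m := haQval ▸ csInf_le hBddA haQ
        _ ≤ (-lam * Real.log Z - lam * ξ) + ε := hmb
        _ ≤ sSup B + ε := add_le_add_left (le_csSup hBddB hb) ε
    · -- case (ii) : ξ < κ
      push_neg at hcase
      set κ := -Real.log p with hκdef
      have hκξ : ξ < κ := hcase
      have hκ0 : 0 < κ := lt_of_le_of_lt hξ hκξ
      have hplt1 : p < 1 := by
        by_contra h
        push_neg at h
        have : 0 ≤ Real.log p := Real.log_nonneg h
        rw [hκdef] at hκ0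
        linarith
      -- s \ M nonempty
      have hsum_sF : ∑ x ∈ sF, P₀ x = 1 := by
        rw [hsF, Finset.sum_filter_of_ne, hP₀1]
        intro x _ hx
        exact (hP₀0 x).lt_of_ne (Ne.symm hx)
      have hMsub : M ⊆ sF := by rw [hMdef]; exact Finset.filter_subset _ _
      have hsum_diff : ∑ x ∈ sF \ M, P₀ x = 1 - p := by
        rw [Finset.sum_sdiff_eq_sub hMsub, hsum_sF, ← hpdef]
      have hdiffne : (sF \ M).Nonempty := by
        apply Finset.nonempty_of_sum_ne_zero (f := P₀)
        rw [hsum_diff]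
        intro h
        have : p = 1 := by linarith
        exact absurd this hplt1.ne
      set δ := (sF \ M).inf' hdiffne (fun x => l x - m) with hδdef
      have hδpos : 0 < δ := by
        rw [hδdef]
        rw [Finset.lt_inf'_iff]
        intro x hx
        obtain ⟨hxs, hxM⟩ := Finset.mem_sdiff.1 hx
        have hxP : 0 < P₀ x := by simpa [hsF] using hxs
        have hxne : l x ≠ m := fun h => hxM ((hM x).2 ⟨hxP, h⟩)
        have := hm_le x hxP
        cases lt_or_eq_of_le this with
        | inl h => linarith
        | inr h => exact absurd h.symm hxne
      have hδle : ∀ x, 0 < P₀ x → l x ≠ m → δ ≤ l x - m := by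
        intro x hx hne
        have hmem : x ∈ sF \ M := Finset.mem_sdiff.2
          ⟨by simp [hsF, hx], fun h => hne ((hM x).1 h).2⟩
        exact Finset.inf'_le _ hmem
      -- endpoints for IVT
      set lamA := min 1 ((κ - ξ) * (p * δ ^ 2) / (8 * C + 4)) with hlamAdef
      have hlamA0 : 0 < lamA := by
        apply lt_min one_pos
        apply div_pos (mul_pos (by linarith) (by positivity)) (by linarith)
      have hlamA1 : lamA ≤ 1 := min_le_left _ _
      set lamB := max lamA (2 * C / ξ) with hlamBdef
      have hlamAB : lamA ≤ lamB := le_max_left _ _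
      have hlamB0 : 0 < lamB := lt_of_lt_of_le hlamA0 hlamAB
      -- the function g
      set g : ℝ → ℝ := fun t =>
        -(∑ x, P₀ x * l x * Real.exp (-l x / t))
            / (t * (∑ x, P₀ x * Real.exp (-l x / t)))
          - Real.log (∑ x, P₀ x * Real.exp (-l x / t)) with hgdef
      have hgA : ξ ≤ g lamA := by
        have := g_lower P₀ hP₀0 hP₀1 l C hC m hm_le hm_abs M hM p hpdef hp
          δ hδpos hδle lamA hlamA0 hlamA1 _ rfl _ rfl
        have hstep : (8 * C + 4) * lamA / (p * δ ^ 2) ≤ κ - ξ := by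
          have hlamA2 : lamA ≤ (κ - ξ) * (p * δ ^ 2) / (8 * C + 4) := min_le_right _ _
          rw [div_le_iff₀ (by positivity)]
          calc (8 * C + 4) * lamA
              ≤ (8 * C + 4) * ((κ - ξ) * (p * δ ^ 2) / (8 * C + 4)) :=
                mul_le_mul_of_nonneg_left hlamA2 (by linarith)
            _ = (κ - ξ) * (p * δ ^ 2) := by field_simp
        rw [hκdef] at hstep
        show ξ ≤ -(∑ x, P₀ x * l x * Real.exp (-l x / lamA))
            / (lamA * (∑ x, P₀ x * Real.exp (-l x / lamA)))
          - Real.log (∑ x, P₀ x * Real.exp (-l x / lamA))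
        linarith [this]
      have hgB : g lamB ≤ ξ := by
        have := g_upper P₀ hP₀0 hP₀1 l C hC lamB hlamB0 _ rfl _ rfl
        have h2C : 2 * C / lamB ≤ ξ := by
          rw [div_le_iff₀ hlamB0]
          have h14 : 2 * C / ξ ≤ lamB := le_max_right _ _
          have h15 := mul_le_mul_of_nonneg_left h14 hξpos.le
          have h16 : ξ * (2 * C / ξ) = 2 * C := by field_simp
          linarith
        show -(∑ x, P₀ x * l x * Real.exp (-l x / lamB))
            / (lamB * (∑ x, P₀ x * Real.exp (-l x / lamB)))
          - Real.log (∑ x, P₀ x * Real.exp (-l x / lamB)) ≤ ξ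
        linarith [this]
      have hcont : ContinuousOn g (Set.Icc lamA lamB) :=
        g_cont P₀ hP₀0 hP₀1 l lamA lamB hlamA0
      have hIVT := intermediate_value_Icc' hlamAB hcont
      have hmemI : ξ ∈ Set.Icc (g lamB) (g lamA) := ⟨hgB, hgA⟩
      obtain ⟨lam, hlamI, hglam⟩ := hIVT hmemI
      have hlam0 : 0 < lam := lt_of_lt_of_le hlamA0 hlamI.1
      set Z := ∑ x, P₀ x * Real.exp (-l x / lam) with hZdef
      have hZ : 0 < Z := Zpos' P₀ hP₀0 hP₀1 _
      set Ef := ∑ x, P₀ x * l x * Real.exp (-l x / lam) with hEfdef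
      set Pt : X → ℝ := fun x => P₀ x * Real.exp (-l x / lam) / Z with hPt
      have hPt0 : ∀ x, 0 ≤ Pt x := fun x =>
        div_nonneg (mul_nonneg (hP₀0 x) (Real.exp_pos _).le) hZ.le
      have hPt1 : ∑ x, Pt x = 1 := pt_sum P₀ hP₀0 hP₀1 l lam Z hZdef
      have hgval : -Ef / (lam * Z) - Real.log Z = ξ := hglam
      have hPtKL : KLdiv Pt P₀ ≤ (ξ : EReal) := by
        rw [hPt, kl_tilt P₀ hP₀0 hP₀1 l lam hlam0 Z hZdef]
        rw [← hEfdef, hgval]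
      have haP : (∑ x, Pt x * l x) ∈ A := ⟨Pt, hPt0, hPt1, hPtKL, rfl⟩
      have haval : ∑ x, Pt x * l x = -lam * Real.log Z - lam * ξ := by
        rw [hPt, pt_avg, ← hEfdef]
        rw [← hgval]
        field_simp
        ring
      have hbP : (-lam * Real.log Z - lam * ξ) ∈ B := ⟨lam, hlam0, by rw [hZdef]⟩
      calc sInf A ≤ ∑ x, Pt x * l x := csInf_le hBddA haP
        _ = -lam * Real.log Z - lam * ξ := haval
        _ ≤ sSup B := le_csSup hBddB hbP
end

section
/- Fix the T-type setup. Let θ* and θ be two transition models, π a policy, and let R assign to each history τ_h a reward R(τ_h) ≥ 0 with ∑_{h=1}^H R(τ_h) ≤ 1 along every trajectory. Let ξ ≥ 0 and suppose C_B ≥ 1 satisfies 𝒫^{θ′}(τ_h) ≤ C_B·𝒫^{θ*}(τ_h) for every θ′ ∈ B¹_T(θ*), every 1 ≤ h ≤ H, and every history τ_h. Then V^π_{B¹_T(θ*),R,1}(o₁) − V^π_{B¹_T(θ),R,1}(o₁) ≤ C_B·∑_{h=1}^{H−1} E^π_{θ*}[ ∑_{o ∈ 𝒪} |T^{θ*}_h(o|τ_h)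 − T^θ_h(o|τ_h)| ], where the expectation is over the history τ_h generated by θ* and π. -/
open Classical
open scoped BigOperators

/-- A transition model for the T-type setup: at each step `h = k+1` (for
`1 ≤ h ≤ H-1`), given the history `τ_h` (its `k` observations `o_{2:h}` beyond the
fixed initial observation and its `k+1` actions `a_{1:h}`), a probability
distribution over the next observation. -/
structure TransModel (O A : Type) [Fintype O] [Fintype A] where
  T : (k : ℕ) → (Fin k → O) → (Fin (k + 1) → A) → O → ℝ
  nonneg : ∀ k o a ob, 0 ≤ T k o a ob
  sum_one : ∀ k o a, ∑ ob, T k o a ob = 1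

/-- A policy: at each step `h = k+1`, given `x_h` (its `k` observations `o_{2:h}`
and `k` actions `a_{1:h-1}`), a probability distribution over actions. -/
structure TPolicy (O A : Type) [Fintype O] [Fintype A] where
  pi : (k : ℕ) → (Fin k → O) → (Fin k → A) → A → ℝ
  nonneg : ∀ k o a act, 0 ≤ pi k o a act
  sum_one : ∀ k o a, ∑ act, pi k o a act = 1

/-- Append an element at the end of a tuple. -/
def snocF {α : Type} {n : ℕ} (f : Fin n → α) (x : α) : Fin (n + 1) → α :=
  fun i => if h : (i : ℕ) < n then f ⟨i, h⟩ else x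

/-- The action-value of policy `π` under transition model `θ` and reward `R`,
at the history `τ_{k+1}`, counting rewards for `n` further steps:
`Qval θ π R n k o a = E^π_θ[∑_{h'=k+1}^{k+1+n} R(τ_{h'}) | τ_{k+1} = (o, a)]`. -/
noncomputable def Qval {O A : Type} [Fintype O] [Fintype A] (θ : TransModel O A)
    (π : TPolicy O A) (R : (k : ℕ) → (Fin k → O) → (Fin (k + 1) → A) → ℝ) :
    (n : ℕ) → (k : ℕ) → (Fin k → O) → (Fin (k + 1) → A) → ℝ
  | 0, k, o, a => R k o a
  | n + 1, k, o, a => R k o a + ∑ ob : O, θ.T k o a ob *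
      ∑ act : A, π.pi (k + 1) (snocF o ob) a act *
        Qval θ π R n (k + 1) (snocF o ob) (snocF a act)

/-- The value of policy `π` under transition model `θ` and reward `R` at `x_{k+1}`:
`Vval θ π R n k o a = E^π_θ[∑_{h'=k+1}^{k+1+n} R(τ_{h'}) | x_{k+1} = (o, a)]`. -/
noncomputable def Vval {O A : Type} [Fintype O] [Fintype A] (θ : TransModel O A)
    (π : TPolicy O A) (R : (k : ℕ) → (Fin k → O) → (Fin (k + 1) → A) → ℝ)
    (n k : ℕ) (o : Fin k → O) (a : Fin k → A) : ℝ :=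
  ∑ act : A, π.pi k o a act * Qval θ π R n k o (snocF a act)

/-- Robust value function `V^π_{B,R,k+1}(x_{k+1})` for horizon `H`. -/
noncomputable def VB {O A : Type} [Fintype O] [Fintype A] (B : Set (TransModel O A))
    (π : TPolicy O A) (R : (k : ℕ) → (Fin k → O) → (Fin (k + 1) → A) → ℝ)
    (H k : ℕ) (o : Fin k → O) (a : Fin k → A) : ℝ :=
  sInf {w : ℝ | ∃ θ ∈ B, w = Vval θ π R (H - (k + 1)) k o a}

/-- Robust action-value function `Q^π_{B,R,k+1}(τ_{k+1})` for horizon `H`. -/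
noncomputable def QB {O A : Type} [Fintype O] [Fintype A] (B : Set (TransModel O A))
    (π : TPolicy O A) (R : (k : ℕ) → (Fin k → O) → (Fin (k + 1) → A) → ℝ)
    (H k : ℕ) (o : Fin k → O) (a : Fin (k + 1) → A) : ℝ :=
  sInf {w : ℝ | ∃ θ ∈ B, w = Qval θ π R (H - (k + 1)) k o a}

/-- The T-type TV uncertainty set `B¹_T(θ*)` of radius `ξ` for horizon `H`. -/
def B1T {O A : Type} [Fintype O] [Fintype A] (θs : TransModel O A) (ξ : ℝ) (H : ℕ) :
    Set (TransModel O A) :=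
  {θ | ∀ k, k < H - 1 → ∀ (o : Fin k → O) (a : Fin (k + 1) → A),
    (∑ ob, |θ.T k o a ob - θs.T k o a ob|) / 2 ≤ ξ}

/-- The T-type KL uncertainty set `B²_T(θ*)` of radius `ξ` for horizon `H`. -/
def B2T {O A : Type} [Fintype O] [Fintype A] (θs : TransModel O A) (ξ : ℝ) (H : ℕ) :
    Set (TransModel O A) :=
  {θ | ∀ k, k < H - 1 → ∀ (o : Fin k → O) (a : Fin (k + 1) → A),
    KLdiv (θ.T k o a) (θs.T k o a) ≤ (ξ : EReal)}

/-- `𝒫^θ(τ_{k+1})`: the probability of the observation prefix of the history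
`τ_{k+1}` under the actions in `τ_{k+1}`, i.e. the product of the transition
probabilities along the history. -/
noncomputable def Pobs {O A : Type} [Fintype O] [Fintype A] (θ : TransModel O A)
    (k : ℕ) (o : Fin k → O) (a : Fin (k + 1) → A) : ℝ :=
  ∏ j : Fin k,
    θ.T j.val (fun i : Fin j.val => o ⟨i.val, by have h1 := i.isLt; have h2 := j.isLt; omega⟩)
      (fun i : Fin (j.val + 1) => a ⟨i.val, by have h1 := i.isLt; have h2 := j.isLt; omega⟩)
      (o j)

/-- The probability of the history `τ_{k+1}` under transition model `θ` and
policy `π` (transition probabilities times policy probabilities). -/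
noncomputable def Ptau {O A : Type} [Fintype O] [Fintype A] (θ : TransModel O A)
    (π : TPolicy O A) (k : ℕ) (o : Fin k → O) (a : Fin (k + 1) → A) : ℝ :=
  Pobs θ k o a *
    ∏ j : Fin (k + 1),
      π.pi j.val (fun i : Fin j.val => o ⟨i.val, by have h1 := i.isLt; have h2 := j.isLt; omega⟩)
        (fun i : Fin j.val => a ⟨i.val, by have h1 := i.isLt; have h2 := j.isLt; omega⟩) (a j)

section Aux

lemma snocF_lt {α : Type} {n : ℕ} (f : Fin n → α) (x : α) (i : Fin (n+1)) (h : (i:ℕ) < n) :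
    snocF f x i = f ⟨i, h⟩ := dif_pos h

lemma snocF_last {α : Type} {n : ℕ} (f : Fin n → α) (x : α) (i : Fin (n+1)) (h : ¬ (i:ℕ) < n) :
    snocF f x i = x := dif_neg h

/-- The snoc equivalence. -/
def snocEquiv (α : Type) (n : ℕ) : ((Fin n → α) × α) ≃ (Fin (n+1) → α) where
  toFun p := snocF p.1 p.2
  invFun g := (fun i => g i.castSucc, g (Fin.last n))
  left_inv p := by
    ext i
    · simp [snocF, Fin.castSucc]
    · simp [snocF, Fin.last]
  right_inv g := by
    funext i
    show snocF _ _ i = g i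
    by_cases h : (i:ℕ) < n
    · rw [snocF_lt _ _ _ h]
      show g (Fin.castSucc ⟨i, h⟩) = g i
      congr 1
    · rw [snocF_last _ _ _ h]
      have : i = Fin.last n := by ext; simp [Fin.last]; omega
      rw [this]

lemma sum_snoc {α : Type} [Fintype α] {n : ℕ} (F : (Fin (n+1) → α) → ℝ) :
    ∑ g : Fin (n+1) → α, F g = ∑ f : Fin n → α, ∑ x : α, F (snocF f x) := by
  rw [← Equiv.sum_comp (snocEquiv α n) F, Fintype.sum_prod_type]
  rfl

end Aux
section Aux2

variable {O A : Type} [Fintype O] [Fintype A]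

/-- Sum of rewards along the strict prefix of a history. -/
noncomputable def prefS (R : (k : ℕ) → (Fin k → O) → (Fin (k + 1) → A) → ℝ)
    (k : ℕ) (o : Fin k → O) (a : Fin (k + 1) → A) : ℝ :=
  ∑ j : Fin k, R j.val
    (fun i : Fin j.val => o ⟨i.val, by have h1 := i.isLt; have h2 := j.isLt; omega⟩)
    (fun i : Fin (j.val + 1) => a ⟨i.val, by have h1 := i.isLt; have h2 := j.isLt; omega⟩)

lemma prefS_nonneg {H : ℕ} (R : (k : ℕ) → (Fin k → O) → (Fin (k + 1) → A) → ℝ)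
    (hR : ∀ j, j < H → ∀ o a, 0 ≤ R j o a) (k : ℕ) (hk : k ≤ H)
    (o : Fin k → O) (a : Fin (k + 1) → A) : 0 ≤ prefS R k o a := by
  apply Finset.sum_nonneg
  intro j _
  exact hR j.val (by have := j.isLt; omega) _ _

lemma prefS_snoc (R : (k : ℕ) → (Fin k → O) → (Fin (k + 1) → A) → ℝ)
    (k : ℕ) (o : Fin k → O) (a : Fin (k + 1) → A) (ob : O) (act : A) :
    prefS R (k + 1) (snocF o ob) (snocF a act) = prefS R k o a + R k o a := by
  unfold prefS
  rw [Fin.sum_univ_castSucc]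
  congr 1
  · apply Finset.sum_congr rfl
    intro j _
    have h3 : ((j.castSucc : Fin (k+1)) : ℕ) = (j : ℕ) := rfl
    congr 1
    · funext i
      exact snocF_lt o ob _ (show (i:ℕ) < k by have h1 := i.isLt; have h2 := j.isLt; omega)
    · funext i
      exact snocF_lt a act _ (show (i:ℕ) < k + 1 by have h1 := i.isLt; have h2 := j.isLt; omega)
  · show R k _ _ = R k o a
    congr 1
    · funext i
      exact snocF_lt o ob _ i.isLt
    · funext i
      exact snocF_lt a act _ i.isLt

lemma Qval_nonneg {H : ℕ} (θ : TransModel O A) (π : TPolicy O A)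
    (R : (k : ℕ) → (Fin k → O) → (Fin (k + 1) → A) → ℝ)
    (hR : ∀ j, j < H → ∀ o a, 0 ≤ R j o a) :
    ∀ n k, k + n < H → ∀ (o : Fin k → O) (a : Fin (k + 1) → A),
      0 ≤ Qval θ π R n k o a := by
  intro n
  induction n with
  | zero => intro k hk o a; exact hR k (by omega) o a
  | succ n ih =>
    intro k hk o a
    show 0 ≤ R k o a + _
    have h1 : 0 ≤ R k o a := hR k (by omega) o a
    have h2 : 0 ≤ ∑ ob : O, θ.T k o a ob *
        ∑ act : A, π.pi (k + 1) (snocF o ob) a act *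
          Qval θ π R n (k + 1) (snocF o ob) (snocF a act) := by
      apply Finset.sum_nonneg; intro ob _
      apply mul_nonneg (θ.nonneg _ _ _ _)
      apply Finset.sum_nonneg; intro act _
      exact mul_nonneg (π.nonneg _ _ _ _) (ih (k+1) (by omega) _ _)
    linarith

lemma Qval_le_one {H : ℕ} (θ : TransModel O A) (π : TPolicy O A)
    (R : (k : ℕ) → (Fin k → O) → (Fin (k + 1) → A) → ℝ)
    (hR1 : ∀ (o : Fin (H - 1) → O) (a : Fin H → A),
      (∑ k : Fin H, R k.val
        (fun i : Fin k.val => o ⟨i.val, by have h2 := k.isLt; have h1 := i.isLt; omega⟩)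
        (fun i : Fin (k.val + 1) => a ⟨i.val, by have h2 := k.isLt; have h1 := i.isLt; omega⟩))
        ≤ 1) :
    ∀ n k, k + n + 1 = H → ∀ (o : Fin k → O) (a : Fin (k + 1) → A),
      prefS R k o a + Qval θ π R n k o a ≤ 1 := by
  intro n
  induction n with
  | zero =>
    intro k hk o a
    obtain rfl : H = k + 1 := by omega
    have h1 := hR1 (fun i => o ⟨i.val, by have := i.isLt; omega⟩)
      (fun i => a ⟨i.val, i.isLt⟩)
    rw [Fin.sum_univ_castSucc] at h1
    exact h1
  | succ n ih =>
    intro k hk o a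
    show prefS R k o a + (R k o a + _) ≤ 1
    have key : ∀ (ob : O) (act : A),
        Qval θ π R n (k + 1) (snocF o ob) (snocF a act)
          ≤ 1 - (prefS R k o a + R k o a) := by
      intro ob act
      have := ih (k + 1) (by omega) (snocF o ob) (snocF a act)
      rw [prefS_snoc] at this
      linarith
    have hsum : (∑ ob : O, θ.T k o a ob *
        ∑ act : A, π.pi (k + 1) (snocF o ob) a act *
          Qval θ π R n (k + 1) (snocF o ob) (snocF a act))
        ≤ 1 - (prefS R k o a + R k o a) := by
      calc (∑ ob : O, θ.T k o a ob *
            ∑ act : A, π.pi (k + 1) (snocF o ob) a act *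
              Qval θ π R n (k + 1) (snocF o ob) (snocF a act))
          ≤ ∑ ob : O, θ.T k o a ob *
            ∑ act : A, π.pi (k + 1) (snocF o ob) a act *
              (1 - (prefS R k o a + R k o a)) := by
            apply Finset.sum_le_sum; intro ob _
            apply mul_le_mul_of_nonneg_left _ (θ.nonneg _ _ _ _)
            apply Finset.sum_le_sum; intro act _
            exact mul_le_mul_of_nonneg_left (key ob act) (π.nonneg _ _ _ _)
        _ = 1 - (prefS R k o a + R k o a) := by
            have : ∀ ob : O, (∑ act : A, π.pi (k + 1) (snocF o ob) a act *
                (1 - (prefS R k o a + R k o a))) = 1 - (prefS R k o a + R k o a) := by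
              intro ob
              rw [← Finset.sum_mul, π.sum_one, one_mul]
            simp only [this]
            rw [← Finset.sum_mul, θ.sum_one, one_mul]
    linarith

end Aux2
section Aux3

variable {O A : Type} [Fintype O] [Fintype A]

/-- Expectation of `f` at the history `j` steps ahead of `τ_{k+1} = (o,a)`,
under transition model `θ` and policy `π`. -/
noncomputable def Eexp (θ : TransModel O A) (π : TPolicy O A) :
    (j k : ℕ) → (Fin k → O) → (Fin (k + 1) → A) →
      ((k' : ℕ) → (Fin k' → O) → (Fin (k' + 1) → A) → ℝ) → ℝ
  | 0, k, o, a, f => f k o a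
  | j + 1, k, o, a, f => ∑ ob : O, θ.T k o a ob *
      ∑ act : A, π.pi (k + 1) (snocF o ob) a act *
        Eexp θ π j (k + 1) (snocF o ob) (snocF a act) f

lemma Eexp_succ_back (θ : TransModel O A) (π : TPolicy O A)
    (f : (k' : ℕ) → (Fin k' → O) → (Fin (k' + 1) → A) → ℝ) :
    ∀ j k (o : Fin k → O) (a : Fin (k + 1) → A),
      Eexp θ π (j + 1) k o a f = Eexp θ π j k o a
        (fun k' o' a' => ∑ ob : O, θ.T k' o' a' ob *
          ∑ act : A, π.pi (k' + 1) (snocF o' ob) a' act *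
            f (k' + 1) (snocF o' ob) (snocF a' act)) := by
  intro j
  induction j with
  | zero => intro k o a; rfl
  | succ j ih =>
    intro k o a
    show (∑ ob : O, θ.T k o a ob * ∑ act : A, _ * Eexp θ π (j+1) (k+1) _ _ f) = _
    simp only [ih]
    rfl

/-- Simulation lemma. -/
lemma sim_lemma {H : ℕ} (θ1 θ2 : TransModel O A) (π : TPolicy O A)
    (R : (k : ℕ) → (Fin k → O) → (Fin (k + 1) → A) → ℝ)
    (f : (k' : ℕ) → (Fin k' → O) → (Fin (k' + 1) → A) → ℝ)
    (hf : ∀ k (o : Fin k → O) (a : Fin (k + 1) → A),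
      (∑ ob : O, |θ1.T k o a ob - θ2.T k o a ob|) ≤ f k o a)
    (N : ℕ)
    (h01 : ∀ m k', m + k' = N → ∀ (o : Fin k' → O) (a : Fin (k' + 1) → A),
      0 ≤ Qval θ2 π R m k' o a ∧ Qval θ2 π R m k' o a ≤ 1) :
    ∀ n k, n + k = N → ∀ (o : Fin k → O) (a : Fin (k + 1) → A),
      Qval θ1 π R n k o a - Qval θ2 π R n k o a
        ≤ ∑ j ∈ Finset.range n, Eexp θ1 π j k o a f := by
  intro n
  induction n with
  | zero => intro k _ o a; simp [Qval]
  | succ n ih =>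
    intro k hk o a
    have hW2 : ∀ ob : O, 0 ≤ (∑ act : A, π.pi (k + 1) (snocF o ob) a act *
        Qval θ2 π R n (k + 1) (snocF o ob) (snocF a act)) ∧
        (∑ act : A, π.pi (k + 1) (snocF o ob) a act *
        Qval θ2 π R n (k + 1) (snocF o ob) (snocF a act)) ≤ 1 := by
      intro ob
      constructor
      · apply Finset.sum_nonneg; intro act _
        exact mul_nonneg (π.nonneg _ _ _ _)
          ((h01 n (k+1) (by omega) _ _).1)
      · calc (∑ act : A, π.pi (k + 1) (snocF o ob) a act *
            Qval θ2 π R n (k + 1) (snocF o ob) (snocF a act))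
            ≤ ∑ act : A, π.pi (k + 1) (snocF o ob) a act * 1 := by
              apply Finset.sum_le_sum; intro act _
              exact mul_le_mul_of_nonneg_left ((h01 n (k+1) (by omega) _ _).2)
                (π.nonneg _ _ _ _)
          _ = 1 := by simp [π.sum_one]
    have expand : Qval θ1 π R (n+1) k o a - Qval θ2 π R (n+1) k o a
        = (∑ ob : O, (θ1.T k o a ob - θ2.T k o a ob) *
            (∑ act : A, π.pi (k + 1) (snocF o ob) a act *
              Qval θ2 π R n (k + 1) (snocF o ob) (snocF a act)))
          + ∑ ob : O, θ1.T k o a ob *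
            (∑ act : A, π.pi (k + 1) (snocF o ob) a act *
              (Qval θ1 π R n (k + 1) (snocF o ob) (snocF a act)
                - Qval θ2 π R n (k + 1) (snocF o ob) (snocF a act))) := by
      have hW : ∀ ob : O, (∑ act : A, π.pi (k + 1) (snocF o ob) a act *
          (Qval θ1 π R n (k + 1) (snocF o ob) (snocF a act)
            - Qval θ2 π R n (k + 1) (snocF o ob) (snocF a act)))
          = (∑ act : A, π.pi (k + 1) (snocF o ob) a act *
              Qval θ1 π R n (k + 1) (snocF o ob) (snocF a act))
            - (∑ act : A, π.pi (k + 1) (snocF o ob) a act *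
              Qval θ2 π R n (k + 1) (snocF o ob) (snocF a act)) := by
        intro ob
        rw [← Finset.sum_sub_distrib]
        exact Finset.sum_congr rfl (fun act _ => mul_sub _ _ _)
      show (R k o a + _) - (R k o a + _) = _
      rw [add_sub_add_left_eq_sub, ← Finset.sum_sub_distrib, ← Finset.sum_add_distrib]
      apply Finset.sum_congr rfl
      intro ob _
      rw [hW ob]
      ring
    rw [expand]
    have t1 : (∑ ob : O, (θ1.T k o a ob - θ2.T k o a ob) *
        (∑ act : A, π.pi (k + 1) (snocF o ob) a act *
          Qval θ2 π R n (k + 1) (snocF o ob) (snocF a act))) ≤ f k o a := by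
      refine le_trans ?_ (hf k o a)
      apply Finset.sum_le_sum
      intro ob _
      calc (θ1.T k o a ob - θ2.T k o a ob) * _
          ≤ |(θ1.T k o a ob - θ2.T k o a ob) *
            (∑ act : A, π.pi (k + 1) (snocF o ob) a act *
              Qval θ2 π R n (k + 1) (snocF o ob) (snocF a act))| := le_abs_self _
        _ = |θ1.T k o a ob - θ2.T k o a ob| * |∑ act : A, π.pi (k + 1) (snocF o ob) a act *
              Qval θ2 π R n (k + 1) (snocF o ob) (snocF a act)| := abs_mul _ _
        _ ≤ |θ1.T k o a ob - θ2.T k o a ob| * 1 := by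
            apply mul_le_mul_of_nonneg_left _ (abs_nonneg _)
            rw [abs_of_nonneg (hW2 ob).1]
            exact (hW2 ob).2
        _ = |θ1.T k o a ob - θ2.T k o a ob| := mul_one _
    have t2 : (∑ ob : O, θ1.T k o a ob *
        (∑ act : A, π.pi (k + 1) (snocF o ob) a act *
          (Qval θ1 π R n (k + 1) (snocF o ob) (snocF a act)
            - Qval θ2 π R n (k + 1) (snocF o ob) (snocF a act))))
        ≤ ∑ j ∈ Finset.range n, Eexp θ1 π (j + 1) k o a f := by
      calc (∑ ob : O, θ1.T k o a ob *
          (∑ act : A, π.pi (k + 1) (snocF o ob) a act *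
            (Qval θ1 π R n (k + 1) (snocF o ob) (snocF a act)
              - Qval θ2 π R n (k + 1) (snocF o ob) (snocF a act))))
          ≤ ∑ ob : O, θ1.T k o a ob *
            (∑ act : A, π.pi (k + 1) (snocF o ob) a act *
              (∑ j ∈ Finset.range n, Eexp θ1 π j (k + 1) (snocF o ob) (snocF a act) f)) := by
            apply Finset.sum_le_sum; intro ob _
            apply mul_le_mul_of_nonneg_left _ (θ1.nonneg _ _ _ _)
            apply Finset.sum_le_sum; intro act _
            exact mul_le_mul_of_nonneg_left
              (ih (k + 1) (by omega) (snocF o ob) (snocF a act)) (π.nonneg _ _ _ _)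
        _ = ∑ ob : O, ∑ j ∈ Finset.range n, (θ1.T k o a ob *
              ∑ act : A, π.pi (k + 1) (snocF o ob) a act *
                Eexp θ1 π j (k + 1) (snocF o ob) (snocF a act) f) := by
            apply Finset.sum_congr rfl
            intro ob _
            rw [show (∑ act : A, π.pi (k + 1) (snocF o ob) a act *
                (∑ j ∈ Finset.range n, Eexp θ1 π j (k + 1) (snocF o ob) (snocF a act) f))
                = ∑ j ∈ Finset.range n, ∑ act : A, π.pi (k + 1) (snocF o ob) a act *
                    Eexp θ1 π j (k + 1) (snocF o ob) (snocF a act) f from by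
              rw [← Finset.sum_comm]
              exact Finset.sum_congr rfl (fun act _ => Finset.mul_sum _ _ _)]
            exact Finset.mul_sum _ _ _
        _ = ∑ j ∈ Finset.range n, ∑ ob : O, (θ1.T k o a ob *
              ∑ act : A, π.pi (k + 1) (snocF o ob) a act *
                Eexp θ1 π j (k + 1) (snocF o ob) (snocF a act) f) := Finset.sum_comm
        _ = ∑ j ∈ Finset.range n, Eexp θ1 π (j + 1) k o a f := rfl
    calc _ ≤ f k o a + ∑ j ∈ Finset.range n, Eexp θ1 π (j + 1) k o a f := add_le_add t1 t2
      _ = ∑ j ∈ Finset.range (n + 1), Eexp θ1 π j k o a f := by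
          rw [Finset.sum_range_succ']
          rw [add_comm]
          rfl

end Aux3
section Aux4

variable {O A : Type} [Fintype O] [Fintype A]

lemma Pobs_snoc (θ : TransModel O A) (k : ℕ) (o : Fin k → O) (a : Fin (k + 1) → A)
    (ob : O) (act : A) :
    Pobs θ (k + 1) (snocF o ob) (snocF a act) = Pobs θ k o a * θ.T k o a ob := by
  unfold Pobs
  rw [Fin.prod_univ_castSucc]
  simp only [Fin.val_last, Fin.coe_castSucc]
  congr 1
  · apply Finset.prod_congr rfl
    intro j _
    congr 1
    · funext i
      exact snocF_lt o ob _ (show (i:ℕ) < k by have h1 := i.isLt; have h2 := j.isLt; omega)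
    · funext i
      exact snocF_lt a act _ (show (i:ℕ) < k + 1 by have h1 := i.isLt; have h2 := j.isLt; omega)
    · exact snocF_lt o ob _ j.isLt
  · congr 1
    · funext i
      exact snocF_lt o ob _ i.isLt
    · funext i
      exact snocF_lt a act _ i.isLt
    · exact snocF_last o ob _ (by simp)

lemma Ptau_snoc (θ : TransModel O A) (η : TPolicy O A) (k : ℕ)
    (o : Fin k → O) (a : Fin (k + 1) → A) (ob : O) (act : A) :
    Ptau θ η (k + 1) (snocF o ob) (snocF a act)
      = Ptau θ η k o a * θ.T k o a ob * η.pi (k + 1) (snocF o ob) a act := by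
  unfold Ptau
  rw [Pobs_snoc, Fin.prod_univ_castSucc]
  simp only [Fin.val_last, Fin.coe_castSucc]
  rw [show ∀ w x y z : ℝ, w * x * (y * z) = w * y * x * z from fun w x y z => by ring]
  congr 1
  · congr 1
    · congr 1
      apply Finset.prod_congr rfl
      intro x _
      congr 1
      · funext i
        exact snocF_lt o ob _ (show (i:ℕ) < k by have h1 := i.isLt; have h2 := x.isLt; omega)
      · funext i
        exact snocF_lt a act _ (show (i:ℕ) < k + 1 by have h1 := i.isLt; have h2 := x.isLt; omega)
      · exact snocF_lt a act _ (show ((x.castSucc : Fin (k+2)) : ℕ) < k + 1 from x.isLt)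
  · congr 1
    · funext i
      exact snocF_lt a act _ i.isLt
    · exact snocF_last a act _ (by simp)

set_option maxHeartbeats 1000000 in
lemma root_eq (θ : TransModel O A) (η : TPolicy O A) (j : ℕ) :
    ∀ f : (k' : ℕ) → (Fin k' → O) → (Fin (k' + 1) → A) → ℝ,
    (∑ o : Fin j → O, ∑ a : Fin (j + 1) → A, Ptau θ η j o a * f j o a)
      = ∑ act : A, η.pi 0 (fun i => i.elim0) (fun i => i.elim0) act *
          Eexp θ η j 0 (fun i => i.elim0) (snocF (fun i => i.elim0) act) f := by
  induction j with
  | zero =>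
    intro f
    have h1 : (∑ o : Fin 0 → O, ∑ a : Fin (0 + 1) → A, Ptau θ η 0 o a * f 0 o a)
        = ∑ a : Fin 1 → A, Ptau θ η 0 (fun i => i.elim0) a * f 0 (fun i => i.elim0) a := by
      rw [Fintype.sum_unique,
        Subsingleton.elim (default : Fin 0 → O) (fun i : Fin 0 => i.elim0)]
    rw [h1, sum_snoc (fun a : Fin 1 → A =>
        Ptau θ η 0 (fun i => i.elim0) a * f 0 (fun i => i.elim0) a),
      Fintype.sum_unique,
      Subsingleton.elim (default : Fin 0 → A) (fun i : Fin 0 => i.elim0)]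
    apply Finset.sum_congr rfl
    intro act _
    have hact : snocF (fun i : Fin 0 => i.elim0) act 0 = act := snocF_last _ act _ (by omega)
    have hP : Ptau θ η 0 (fun i : Fin 0 => i.elim0) (snocF (fun i : Fin 0 => i.elim0) act)
        = η.pi 0 (fun i => i.elim0) (fun i => i.elim0) act := by
      unfold Ptau Pobs
      rw [Fin.prod_univ_zero, Fin.prod_univ_one, one_mul]
      congr 1
      all_goals first
        | (funext i; exact i.elim0)
        | exact hact
    rw [hP]
    rfl
  | succ j ih =>
    intro f
    rw [sum_snoc (fun o : Fin (j+1) → O => ∑ a : Fin (j + 2) → A,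
      Ptau θ η (j+1) o a * f (j+1) o a)]
    have step1 : ∀ (o : Fin j → O) (ob : O),
        (∑ a : Fin (j + 2) → A, Ptau θ η (j+1) (snocF o ob) a * f (j+1) (snocF o ob) a)
        = ∑ a : Fin (j+1) → A, ∑ act : A,
            Ptau θ η j o a * θ.T j o a ob * η.pi (j + 1) (snocF o ob) a act *
              f (j+1) (snocF o ob) (snocF a act) := by
      intro o ob
      rw [sum_snoc (fun a : Fin (j+2) → A => Ptau θ η (j+1) (snocF o ob) a * f (j+1) (snocF o ob) a)]
      apply Finset.sum_congr rfl
      intro a _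
      apply Finset.sum_congr rfl
      intro act _
      rw [Ptau_snoc]
    simp only [step1]
    have step2 : (∑ o : Fin j → O, ∑ ob : O, ∑ a : Fin (j+1) → A, ∑ act : A,
          Ptau θ η j o a * θ.T j o a ob * η.pi (j + 1) (snocF o ob) a act *
            f (j+1) (snocF o ob) (snocF a act))
        = ∑ o : Fin j → O, ∑ a : Fin (j+1) → A, Ptau θ η j o a *
            (∑ ob : O, θ.T j o a ob * ∑ act : A, η.pi (j + 1) (snocF o ob) a act *
              f (j+1) (snocF o ob) (snocF a act)) := by
      apply Finset.sum_congr rfl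
      intro o _
      rw [Finset.sum_comm]
      apply Finset.sum_congr rfl
      intro a _
      rw [Finset.mul_sum]
      apply Finset.sum_congr rfl
      intro ob _
      rw [Finset.mul_sum, Finset.mul_sum]
      apply Finset.sum_congr rfl
      intro act _
      ring
    rw [step2]
    refine Eq.trans (ih (fun k' o' a' => ∑ ob : O, θ.T k' o' a' ob *
        ∑ act : A, η.pi (k' + 1) (snocF o' ob) a' act *
          f (k' + 1) (snocF o' ob) (snocF a' act))) ?_
    apply Finset.sum_congr rfl
    intro act _
    congr 1
    exact (Eexp_succ_back θ η f j 0 _ _).symm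

end Aux4
theorem stmt7 {O A : Type} [Fintype O] [Fintype A] [Nonempty O] [Nonempty A]
    (H : ℕ) (hH : 2 ≤ H) (θstar θ : TransModel O A) (π : TPolicy O A)
    (R : (k : ℕ) → (Fin k → O) → (Fin (k + 1) → A) → ℝ)
    (hR0 : ∀ k, k < H → ∀ o a, 0 ≤ R k o a)
    (hR1 : ∀ (o : Fin (H - 1) → O) (a : Fin H → A),
      (∑ k : Fin H, R k.val
        (fun i : Fin k.val => o ⟨i.val, by have h1 := i.isLt; have h2 := k.isLt; omega⟩)
        (fun i : Fin (k.val + 1) => a ⟨i.val, by have h1 := i.isLt; have h2 := k.isLt; omega⟩))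
        ≤ 1)
    (ξ : ℝ) (hξ : 0 ≤ ξ) (CB : ℝ) (hCB1 : 1 ≤ CB)
    (hCB : ∀ θ' ∈ B1T θstar ξ H, ∀ k, k < H → ∀ (o : Fin k → O) (a : Fin (k + 1) → A),
      Pobs θ' k o a ≤ CB * Pobs θstar k o a) :
    VB (B1T θstar ξ H) π R H 0 (fun i => i.elim0) (fun i => i.elim0)
      - VB (B1T θ ξ H) π R H 0 (fun i => i.elim0) (fun i => i.elim0)
      ≤ CB * ∑ k ∈ Finset.range (H - 1), ∑ o : Fin k → O, ∑ a : Fin (k + 1) → A,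
          Ptau θstar π k o a * ∑ ob : O, |θstar.T k o a ob - θ.T k o a ob| := by
  classical
  set g : (k : ℕ) → (Fin k → O) → (Fin (k + 1) → A) → ℝ :=
    fun k o a => ∑ ob : O, |θstar.T k o a ob - θ.T k o a ob| with hg
  have hg0 : ∀ k (o : Fin k → O) (a : Fin (k + 1) → A), 0 ≤ g k o a := by
    intro k o a
    exact Finset.sum_nonneg (fun ob _ => abs_nonneg _)
  set RHS : ℝ := CB * ∑ k ∈ Finset.range (H - 1), ∑ o : Fin k → O, ∑ a : Fin (k + 1) → A,
      Ptau θstar π k o a * g k o a with hRHS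
  -- the two sInf sets
  set S1 : Set ℝ := {w : ℝ | ∃ θ' ∈ B1T θstar ξ H, w = Vval θ' π R (H - (0 + 1)) 0
    (fun i => i.elim0) (fun i => i.elim0)} with hS1
  set S2 : Set ℝ := {w : ℝ | ∃ θ' ∈ B1T θ ξ H, w = Vval θ' π R (H - (0 + 1)) 0
    (fun i => i.elim0) (fun i => i.elim0)} with hS2
  have hVB1 : VB (B1T θstar ξ H) π R H 0 (fun i => i.elim0) (fun i => i.elim0) = sInf S1 := rfl
  have hVB2 : VB (B1T θ ξ H) π R H 0 (fun i => i.elim0) (fun i => i.elim0) = sInf S2 := rfl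
  rw [hVB1, hVB2]
  -- S1 is bounded below by 0
  have hS1bdd : ∀ w ∈ S1, (0:ℝ) ≤ w := by
    rintro w ⟨θ', _, rfl⟩
    apply Finset.sum_nonneg
    intro act _
    apply mul_nonneg (π.nonneg _ _ _ _)
    exact Qval_nonneg (H := H) θ' π R hR0 (H - (0+1)) 0 (by omega) _ _
  -- θ ∈ B2
  have hθB2 : θ ∈ B1T θ ξ H := by
    intro k _ o a
    simp
    positivity
  have hS2ne : S2.Nonempty := ⟨_, θ, hθB2, rfl⟩
  -- main step: for every θ2 ∈ B2, sInf S1 ≤ Vval θ2 + RHS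
  have key : ∀ w ∈ S2, sInf S1 ≤ w + RHS := by
    rintro w ⟨θ2, hθ2, rfl⟩
    -- construct θ1
    set e2 : (k : ℕ) → (Fin k → O) → (Fin (k + 1) → A) → ℝ :=
      fun k o a => ∑ ob : O, |θ2.T k o a ob - θstar.T k o a ob| with he2
    have he2nn : ∀ k o a, 0 ≤ e2 k o a :=
      fun k o a => Finset.sum_nonneg (fun ob _ => abs_nonneg _)
    set lam : (k : ℕ) → (Fin k → O) → (Fin (k + 1) → A) → ℝ :=
      fun k o a => if k < H - 1 ∧ 2 * ξ < e2 k o a then 2 * ξ / e2 k o a else 1 with hlam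
    have hlam0 : ∀ k o a, 0 ≤ lam k o a := by
      intro k o a
      by_cases hc : k < H - 1 ∧ 2 * ξ < e2 k o a
      · rw [hlam]; simp only [if_pos hc]; positivity
      · rw [hlam]; simp only [if_neg hc]; norm_num
    have hlam1 : ∀ k o a, lam k o a ≤ 1 := by
      intro k o a
      by_cases hc : k < H - 1 ∧ 2 * ξ < e2 k o a
      · rw [hlam]; simp only [if_pos hc]
        rw [div_le_one (by linarith [hc.2])]
        linarith [hc.2]
      · rw [hlam]; simp only [if_neg hc]
        exact le_refl 1
    set θ1 : TransModel O A :=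
      { T := fun k o a ob => (1 - lam k o a) * θstar.T k o a ob + lam k o a * θ2.T k o a ob
        nonneg := by
          intro k o a ob
          have h1 := hlam0 k o a
          have h2 := hlam1 k o a
          have h3 := mul_nonneg (show (0:ℝ) ≤ 1 - lam k o a by linarith)
            (θstar.nonneg k o a ob)
          have h4 := mul_nonneg h1 (θ2.nonneg k o a ob)
          show 0 ≤ (1 - lam k o a) * θstar.T k o a ob + lam k o a * θ2.T k o a ob
          linarith
        sum_one := by
          intro k o a
          rw [Finset.sum_add_distrib, ← Finset.mul_sum, ← Finset.mul_sum,
            θstar.sum_one, θ2.sum_one]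
          ring } with hθ1
    have hT1 : ∀ k o a ob, θ1.T k o a ob
        = (1 - lam k o a) * θstar.T k o a ob + lam k o a * θ2.T k o a ob := fun _ _ _ _ => rfl
    have hdiff1 : ∀ k (o : Fin k → O) (a : Fin (k+1) → A),
        (∑ ob : O, |θ1.T k o a ob - θstar.T k o a ob|) = lam k o a * e2 k o a := by
      intro k o a
      rw [he2, Finset.mul_sum]
      apply Finset.sum_congr rfl
      intro ob _
      rw [hT1]
      rw [show (1 - lam k o a) * θstar.T k o a ob + lam k o a * θ2.T k o a ob
          - θstar.T k o a ob = lam k o a * (θ2.T k o a ob - θstar.T k o a ob) from by ring]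
      rw [abs_mul, abs_of_nonneg (hlam0 k o a)]
    have hdiff2 : ∀ k (o : Fin k → O) (a : Fin (k+1) → A),
        (∑ ob : O, |θ1.T k o a ob - θ2.T k o a ob|) = (1 - lam k o a) * e2 k o a := by
      intro k o a
      rw [he2, Finset.mul_sum]
      apply Finset.sum_congr rfl
      intro ob _
      rw [hT1]
      rw [show (1 - lam k o a) * θstar.T k o a ob + lam k o a * θ2.T k o a ob
          - θ2.T k o a ob = (1 - lam k o a) * (θstar.T k o a ob - θ2.T k o a ob) from by ring]
      rw [abs_mul, abs_of_nonneg (by linarith [hlam1 k o a]), abs_sub_comm]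
    have hθ1B1 : θ1 ∈ B1T θstar ξ H := by
      intro k hk o a
      rw [hdiff1 k o a]
      by_cases hc : 2 * ξ < e2 k o a
      · have hl : lam k o a = 2 * ξ / e2 k o a := by rw [hlam]; exact if_pos ⟨hk, hc⟩
        have hpos : 0 < e2 k o a := lt_of_le_of_lt (by positivity) hc
        rw [hl, div_mul_cancel₀ _ (ne_of_gt hpos)]
        linarith
      · have hl : lam k o a = 1 := by
          rw [hlam]
          exact if_neg (fun hcc => hc hcc.2)
        rw [hl, one_mul]
        push_neg at hc
        linarith
    have hfg : ∀ k (o : Fin k → O) (a : Fin (k+1) → A),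
        (∑ ob : O, |θ1.T k o a ob - θ2.T k o a ob|) ≤ g k o a := by
      intro k o a
      rw [hdiff2 k o a]
      by_cases hc : k < H - 1 ∧ 2 * ξ < e2 k o a
      · have hl : lam k o a = 2 * ξ / e2 k o a := by rw [hlam]; exact if_pos hc
        have hpos : 0 < e2 k o a := lt_of_le_of_lt (by positivity) hc.2
        have hval : (1 - lam k o a) * e2 k o a = e2 k o a - 2 * ξ := by
          rw [hl]; field_simp
        rw [hval]
        have htri : e2 k o a ≤ (∑ ob : O, |θ2.T k o a ob - θ.T k o a ob|) + g k o a := by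
          rw [he2, hg, ← Finset.sum_add_distrib]
          apply Finset.sum_le_sum
          intro ob _
          rw [show |θstar.T k o a ob - θ.T k o a ob| = |θ.T k o a ob - θstar.T k o a ob|
            from abs_sub_comm _ _]
          calc |θ2.T k o a ob - θstar.T k o a ob|
              = |(θ2.T k o a ob - θ.T k o a ob) + (θ.T k o a ob - θstar.T k o a ob)| := by
                ring_nf
            _ ≤ _ := abs_add_le _ _
        have hB2 : (∑ ob : O, |θ2.T k o a ob - θ.T k o a ob|) ≤ 2 * ξ := by
          have := hθ2 k hc.1 o a
          linarith
        linarith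
      · have hl : lam k o a = 1 := by rw [hlam]; exact if_neg hc
        rw [hl]
        simp only [sub_self, zero_mul]
        exact hg0 k o a
    -- bounds on Qval θ2
    have h01 : ∀ m k', m + k' = H - 1 → ∀ (o : Fin k' → O) (a : Fin (k' + 1) → A),
        0 ≤ Qval θ2 π R m k' o a ∧ Qval θ2 π R m k' o a ≤ 1 := by
      intro m k' hmk o a
      constructor
      · exact Qval_nonneg (H := H) θ2 π R hR0 m k' (by omega) o a
      · have hle := Qval_le_one (H := H) θ2 π R hR1 m k' (by omega) o a
        have hpre : 0 ≤ prefS R k' o a := prefS_nonneg (H := H) R hR0 k' (by omega) o a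
        linarith
    -- simulation lemma
    have hsim := sim_lemma (H := H) θ1 θ2 π R g hfg (H - 1) h01 (H - 1) 0 (by omega)
    -- value difference
    have hV : Vval θ1 π R (H - 1) 0 (fun i => i.elim0) (fun i => i.elim0)
        ≤ Vval θ2 π R (H - 1) 0 (fun i => i.elim0) (fun i => i.elim0)
          + ∑ act : A, π.pi 0 (fun i => i.elim0) (fun i => i.elim0) act *
              ∑ j ∈ Finset.range (H - 1), Eexp θ1 π j 0 (fun i => i.elim0)
                (snocF (fun i => i.elim0) act) g := by
      unfold Vval
      rw [← Finset.sum_add_distrib]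
      apply Finset.sum_le_sum
      intro act _
      have hq := hsim (fun i => i.elim0) (snocF (fun i => i.elim0) act)
      have hπ := π.nonneg 0 (fun i : Fin 0 => i.elim0) (fun i : Fin 0 => i.elim0) act
      nlinarith [hq, hπ]
    -- convert expectation to Ptau sums
    have hconv : (∑ act : A, π.pi 0 (fun i => i.elim0) (fun i => i.elim0) act *
        ∑ j ∈ Finset.range (H - 1), Eexp θ1 π j 0 (fun i => i.elim0)
          (snocF (fun i => i.elim0) act) g)
        = ∑ j ∈ Finset.range (H - 1), ∑ o : Fin j → O, ∑ a : Fin (j + 1) → A,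
            Ptau θ1 π j o a * g j o a := by
      rw [show (∑ act : A, π.pi 0 (fun i => i.elim0) (fun i => i.elim0) act *
          ∑ j ∈ Finset.range (H - 1), Eexp θ1 π j 0 (fun i => i.elim0)
            (snocF (fun i => i.elim0) act) g)
          = ∑ j ∈ Finset.range (H - 1), ∑ act : A,
              π.pi 0 (fun i => i.elim0) (fun i => i.elim0) act *
                Eexp θ1 π j 0 (fun i => i.elim0) (snocF (fun i => i.elim0) act) g from by
        rw [← Finset.sum_comm]
        exact Finset.sum_congr rfl (fun act _ => Finset.mul_sum _ _ _)]
      apply Finset.sum_congr rfl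
      intro j _
      exact (root_eq θ1 π j g).symm
    -- compare Ptau θ1 with CB * Ptau θstar
    have hPt : ∀ j, j < H - 1 → ∀ (o : Fin j → O) (a : Fin (j + 1) → A),
        Ptau θ1 π j o a ≤ CB * Ptau θstar π j o a := by
      intro j hj o a
      unfold Ptau
      have hpol : (0:ℝ) ≤ ∏ i : Fin (j + 1),
          π.pi (i : ℕ)
            (fun i' : Fin (i : ℕ) => o ⟨(i':ℕ), by have h1 := i'.isLt; have h2 := i.isLt; omega⟩)
            (fun i' : Fin (i : ℕ) => a ⟨(i':ℕ), by have h1 := i'.isLt; have h2 := i.isLt; omega⟩)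
            (a i) :=
        Finset.prod_nonneg (fun i _ => π.nonneg _ _ _ _)
      have hPo := hCB θ1 hθ1B1 j (by omega) o a
      calc Pobs θ1 j o a * _ ≤ (CB * Pobs θstar j o a) * _ :=
            mul_le_mul_of_nonneg_right hPo hpol
        _ = CB * (Pobs θstar j o a * _) := by ring
    have hfinal : (∑ j ∈ Finset.range (H - 1), ∑ o : Fin j → O, ∑ a : Fin (j + 1) → A,
        Ptau θ1 π j o a * g j o a) ≤ RHS := by
      rw [hRHS, Finset.mul_sum]
      apply Finset.sum_le_sum
      intro j hj
      rw [Finset.mul_sum]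
      apply Finset.sum_le_sum
      intro o _
      rw [Finset.mul_sum]
      apply Finset.sum_le_sum
      intro a _
      calc Ptau θ1 π j o a * g j o a ≤ (CB * Ptau θstar π j o a) * g j o a :=
            mul_le_mul_of_nonneg_right (hPt j (Finset.mem_range.mp hj) o a) (hg0 j o a)
        _ = CB * (Ptau θstar π j o a * g j o a) := by ring
    -- put it together
    have hmem : Vval θ1 π R (H - (0 + 1)) 0 (fun i : Fin 0 => i.elim0)
        (fun i : Fin 0 => i.elim0) ∈ S1 := ⟨θ1, hθ1B1, rfl⟩
    have hinf := csInf_le ⟨0, fun w hw => hS1bdd w hw⟩ hmem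
    calc sInf S1 ≤ Vval θ1 π R (H - (0 + 1)) 0 (fun i : Fin 0 => i.elim0)
          (fun i : Fin 0 => i.elim0) := hinf
      _ ≤ Vval θ2 π R (H - 1) 0 (fun i => i.elim0) (fun i => i.elim0)
          + ∑ act : A, π.pi 0 (fun i => i.elim0) (fun i => i.elim0) act *
              ∑ j ∈ Finset.range (H - 1), Eexp θ1 π j 0 (fun i => i.elim0)
                (snocF (fun i => i.elim0) act) g := hV
      _ ≤ Vval θ2 π R (H - 1) 0 (fun i => i.elim0) (fun i => i.elim0) + RHS := by
          rw [hconv] at *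
          linarith [hfinal]
      _ = Vval θ2 π R (H - (0 + 1)) 0 (fun i : Fin 0 => i.elim0)
          (fun i : Fin 0 => i.elim0) + RHS := rfl
  have h2 : sInf S1 - RHS ≤ sInf S2 := by
    apply le_csInf hS2ne
    intro w hw
    linarith [key w hw]
  linarith
end

section
/- Let X and Y be finite nonempty sets and let P, Q ∈ Δ(X × Y) be joint distributions whose X-marginals P_X, Q_X are strictly positive everywhere on X. Then ∑_{x∈X} P_X(x) · ∑_{y∈Y} |P_{Y|X}(y|x) − Q_{Y|X}(y|x)| ≤ 2 · ∑_{x∈X, y∈Y} |P(x,y) − Q(x,y)|. -/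
open scoped BigOperators

theorem stmt9 {X Y : Type*} [Fintype X] [Fintype Y] [Nonempty X] [Nonempty Y]
    (P Q : X × Y → ℝ)
    (hP0 : ∀ p, 0 ≤ P p) (hP1 : ∑ p, P p = 1)
    (hQ0 : ∀ p, 0 ≤ Q p) (hQ1 : ∑ p, Q p = 1)
    (hPX : ∀ x, 0 < ∑ y, P (x, y)) (hQX : ∀ x, 0 < ∑ y, Q (x, y)) :
    ∑ x, (∑ y, P (x, y)) *
        ∑ y, |P (x, y) / (∑ y', P (x, y')) - Q (x, y) / (∑ y', Q (x, y'))|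
      ≤ 2 * ∑ p : X × Y, |P p - Q p| := by
  have key : ∀ x, (∑ y, P (x, y)) *
      ∑ y, |P (x, y) / (∑ y', P (x, y')) - Q (x, y) / (∑ y', Q (x, y'))|
      ≤ 2 * ∑ y, |P (x, y) - Q (x, y)| := by
    intro x
    have ha := hPX x
    have hb := hQX x
    set a := ∑ y, P (x, y) with ha_def
    set b := ∑ y, Q (x, y) with hb_def
    rw [Finset.mul_sum]
    have step1 : ∀ y : Y, a * |P (x, y) / a - Q (x, y) / b|
        = |P (x, y) - a / b * Q (x, y)| := by
      intro y
      rw [← abs_of_pos ha, ← abs_mul, abs_of_pos ha]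
      congr 1
      field_simp
    have step2 : ∀ y : Y, |P (x, y) - a / b * Q (x, y)|
        ≤ |P (x, y) - Q (x, y)| + Q (x, y) / b * |b - a| := by
      intro y
      have : P (x, y) - a / b * Q (x, y)
          = (P (x, y) - Q (x, y)) + (Q (x, y) - a / b * Q (x, y)) := by ring
      rw [this]
      refine (abs_add_le _ _).trans ?_
      gcongr
      have : Q (x, y) - a / b * Q (x, y) = Q (x, y) / b * (b - a) := by
        field_simp
      rw [this, abs_mul, abs_of_nonneg (div_nonneg (hQ0 _) hb.le)]
    calc ∑ y, a * |P (x, y) / a - Q (x, y) / b|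
        ≤ ∑ y, (|P (x, y) - Q (x, y)| + Q (x, y) / b * |b - a|) := by
          refine Finset.sum_le_sum fun y _ => ?_
          rw [step1 y]; exact step2 y
      _ = ∑ y, |P (x, y) - Q (x, y)| + |b - a| := by
          rw [Finset.sum_add_distrib, ← Finset.sum_mul, ← Finset.sum_div,
            ← hb_def, div_self hb.ne', one_mul]
      _ ≤ ∑ y, |P (x, y) - Q (x, y)| + ∑ y, |P (x, y) - Q (x, y)| := by
          gcongr
          calc |b - a| = |∑ y, (Q (x, y) - P (x, y))| := by
                rw [Finset.sum_sub_distrib]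
            _ ≤ ∑ y, |Q (x, y) - P (x, y)| := Finset.abs_sum_le_sum_abs _ _
            _ = ∑ y, |P (x, y) - Q (x, y)| := by
                simp [abs_sub_comm]
      _ = 2 * ∑ y, |P (x, y) - Q (x, y)| := by ring
  calc ∑ x, (∑ y, P (x, y)) *
        ∑ y, |P (x, y) / (∑ y', P (x, y')) - Q (x, y) / (∑ y', Q (x, y'))|
      ≤ ∑ x, 2 * ∑ y, |P (x, y) - Q (x, y)| :=
        Finset.sum_le_sum fun x _ => key x
    _ = 2 * ∑ p : X × Y, |P p - Q p| := by
        rw [← Finset.mul_sum, Fintype.sum_prod_type]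
end

section
/- Let X and Y be finite nonempty sets, P, Q ∈ Δ(X), and let P_{Y|X}, Q_{Y|X} : X → Δ(Y) be conditional kernels. Define the joint distributions P_{XY}(x,y) := P(x)·P_{Y|X}(y|x) and Q_{XY}(x,y) := Q(x)·Q_{Y|X}(y|x). Then ∑_{x∈X} P(x) · D_H²(P_{Y|X}(·|x), Q_{Y|X}(·|x)) ≤ 8 · D_H²(P_{XY}, Q_{XY}). -/
open scoped BigOperators

theorem stmt12 {X Y : Type*} [Fintype X] [Fintype Y] [Nonempty X] [Nonempty Y]
    (P Q : X → ℝ) (hP0 : ∀ x, 0 ≤ P x) (hP1 : ∑ x, P x = 1)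
    (hQ0 : ∀ x, 0 ≤ Q x) (hQ1 : ∑ x, Q x = 1)
    (PY QY : X → Y → ℝ)
    (hPY0 : ∀ x y, 0 ≤ PY x y) (hPY1 : ∀ x, ∑ y, PY x y = 1)
    (hQY0 : ∀ x y, 0 ≤ QY x y) (hQY1 : ∀ x, ∑ y, QY x y = 1) :
    ∑ x, P x * (1 / 2 * ∑ y, (Real.sqrt (PY x y) - Real.sqrt (QY x y)) ^ 2)
      ≤ 8 * (1 / 2 * ∑ p : X × Y,
          (Real.sqrt (P p.1 * PY p.1 p.2) - Real.sqrt (Q p.1 * QY p.1 p.2)) ^ 2) := by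
  set s : X → ℝ := fun x => ∑ y, Real.sqrt (PY x y) * Real.sqrt (QY x y) with hs
  -- Cauchy–Schwarz: s x ≤ 1
  have hs_le : ∀ x, s x ≤ 1 := by
    intro x
    have h := Finset.sum_mul_sq_le_sq_mul_sq Finset.univ
      (fun y => Real.sqrt (PY x y)) (fun y => Real.sqrt (QY x y))
    simp only [Real.sq_sqrt (hPY0 x _), Real.sq_sqrt (hQY0 x _)] at h
    rw [hPY1 x, hQY1 x] at h
    have h0 : 0 ≤ s x :=
      Finset.sum_nonneg fun y _ => mul_nonneg (Real.sqrt_nonneg _) (Real.sqrt_nonneg _)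
    nlinarith [h, h0]
  -- expansion of the joint Hellinger term for each x
  have expand : ∀ x, ∑ y, (Real.sqrt (P x * PY x y) - Real.sqrt (Q x * QY x y)) ^ 2
      = P x + Q x - 2 * (Real.sqrt (P x) * Real.sqrt (Q x)) * s x := by
    intro x
    have hpt : ∀ y, (Real.sqrt (P x * PY x y) - Real.sqrt (Q x * QY x y)) ^ 2
        = P x * PY x y + Q x * QY x y
          - 2 * (Real.sqrt (P x) * Real.sqrt (Q x))
            * (Real.sqrt (PY x y) * Real.sqrt (QY x y)) := by
      intro y
      rw [Real.sqrt_mul (hP0 x), Real.sqrt_mul (hQ0 x)]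
      have hp := Real.sq_sqrt (hP0 x)
      have hq := Real.sq_sqrt (hQ0 x)
      have hpy := Real.sq_sqrt (hPY0 x y)
      have hqy := Real.sq_sqrt (hQY0 x y)
      linear_combination (PY x y) * hp + (Real.sqrt (P x)) ^ 2 * hpy
        + (QY x y) * hq + (Real.sqrt (Q x)) ^ 2 * hqy
    calc ∑ y, (Real.sqrt (P x * PY x y) - Real.sqrt (Q x * QY x y)) ^ 2
        = ∑ y, (P x * PY x y + Q x * QY x y
            - 2 * (Real.sqrt (P x) * Real.sqrt (Q x))
              * (Real.sqrt (PY x y) * Real.sqrt (QY x y))) :=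
          Finset.sum_congr rfl fun y _ => hpt y
      _ = P x * ∑ y, PY x y + Q x * ∑ y, QY x y
            - 2 * (Real.sqrt (P x) * Real.sqrt (Q x)) * s x := by
          simp [Finset.sum_sub_distrib, Finset.sum_add_distrib, ← Finset.mul_sum, hs]
      _ = P x + Q x - 2 * (Real.sqrt (P x) * Real.sqrt (Q x)) * s x := by
          rw [hPY1 x, hQY1 x]; ring
  -- marginal expansion
  have expandM : ∀ x, (Real.sqrt (P x) - Real.sqrt (Q x)) ^ 2
      = P x + Q x - 2 * (Real.sqrt (P x) * Real.sqrt (Q x)) := by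
    intro x
    have hp := Real.sq_sqrt (hP0 x)
    have hq := Real.sq_sqrt (hQ0 x)
    linear_combination hp + hq
  -- marginal Hellinger ≤ joint Hellinger (data processing)
  have keyM : ∑ x, (Real.sqrt (P x) - Real.sqrt (Q x)) ^ 2
      ≤ ∑ x, ∑ y, (Real.sqrt (P x * PY x y) - Real.sqrt (Q x * QY x y)) ^ 2 := by
    apply Finset.sum_le_sum
    intro x _
    rw [expand x, expandM x]
    have h1 : 0 ≤ Real.sqrt (P x) * Real.sqrt (Q x) :=
      mul_nonneg (Real.sqrt_nonneg _) (Real.sqrt_nonneg _)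
    nlinarith [hs_le x, h1]
  -- per-x bound
  have key1 : ∀ x, P x * (∑ y, (Real.sqrt (PY x y) - Real.sqrt (QY x y)) ^ 2)
      ≤ 2 * ∑ y, (Real.sqrt (P x * PY x y) - Real.sqrt (Q x * QY x y)) ^ 2
        + 2 * (Real.sqrt (P x) - Real.sqrt (Q x)) ^ 2 := by
    intro x
    have step1 : P x * (∑ y, (Real.sqrt (PY x y) - Real.sqrt (QY x y)) ^ 2)
        = ∑ y, (Real.sqrt (P x * PY x y) - Real.sqrt (P x * QY x y)) ^ 2 := by
      rw [Finset.mul_sum]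
      apply Finset.sum_congr rfl
      intro y _
      rw [Real.sqrt_mul (hP0 x), Real.sqrt_mul (hP0 x)]
      have hp := Real.sq_sqrt (hP0 x)
      linear_combination (-((Real.sqrt (PY x y) - Real.sqrt (QY x y)) ^ 2)) * hp
    rw [step1]
    have step2 : ∀ y, (Real.sqrt (P x * PY x y) - Real.sqrt (P x * QY x y)) ^ 2
        ≤ 2 * (Real.sqrt (P x * PY x y) - Real.sqrt (Q x * QY x y)) ^ 2
          + 2 * (Real.sqrt (Q x * QY x y) - Real.sqrt (P x * QY x y)) ^ 2 := by
      intro y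
      nlinarith [sq_nonneg (Real.sqrt (P x * PY x y) - 2 * Real.sqrt (Q x * QY x y)
        + Real.sqrt (P x * QY x y))]
    have step3 : ∑ y, (Real.sqrt (Q x * QY x y) - Real.sqrt (P x * QY x y)) ^ 2
        = (Real.sqrt (P x) - Real.sqrt (Q x)) ^ 2 := by
      have : ∀ y, (Real.sqrt (Q x * QY x y) - Real.sqrt (P x * QY x y)) ^ 2
          = (Real.sqrt (P x) - Real.sqrt (Q x)) ^ 2 * QY x y := by
        intro y
        rw [Real.sqrt_mul (hQ0 x), Real.sqrt_mul (hP0 x)]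
        have hqy := Real.sq_sqrt (hQY0 x y)
        linear_combination ((Real.sqrt (Q x) - Real.sqrt (P x)) ^ 2) * hqy
      rw [Finset.sum_congr rfl fun y _ => this y, ← Finset.mul_sum, hQY1 x, mul_one]
    calc ∑ y, (Real.sqrt (P x * PY x y) - Real.sqrt (P x * QY x y)) ^ 2
        ≤ ∑ y, (2 * (Real.sqrt (P x * PY x y) - Real.sqrt (Q x * QY x y)) ^ 2
            + 2 * (Real.sqrt (Q x * QY x y) - Real.sqrt (P x * QY x y)) ^ 2) :=
          Finset.sum_le_sum fun y _ => step2 y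
      _ = 2 * ∑ y, (Real.sqrt (P x * PY x y) - Real.sqrt (Q x * QY x y)) ^ 2
            + 2 * ∑ y, (Real.sqrt (Q x * QY x y) - Real.sqrt (P x * QY x y)) ^ 2 := by
          rw [Finset.sum_add_distrib, ← Finset.mul_sum, ← Finset.mul_sum]
      _ = 2 * ∑ y, (Real.sqrt (P x * PY x y) - Real.sqrt (Q x * QY x y)) ^ 2
            + 2 * (Real.sqrt (P x) - Real.sqrt (Q x)) ^ 2 := by rw [step3]
  -- assemble
  have hJ : ∑ p : X × Y, (Real.sqrt (P p.1 * PY p.1 p.2) - Real.sqrt (Q p.1 * QY p.1 p.2)) ^ 2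
      = ∑ x, ∑ y, (Real.sqrt (P x * PY x y) - Real.sqrt (Q x * QY x y)) ^ 2 :=
    Fintype.sum_prod_type _
  have hJ0 : 0 ≤ ∑ x, ∑ y, (Real.sqrt (P x * PY x y) - Real.sqrt (Q x * QY x y)) ^ 2 :=
    Finset.sum_nonneg fun x _ => Finset.sum_nonneg fun y _ => sq_nonneg _
  have main : ∑ x, P x * (∑ y, (Real.sqrt (PY x y) - Real.sqrt (QY x y)) ^ 2)
      ≤ 4 * ∑ x, ∑ y, (Real.sqrt (P x * PY x y) - Real.sqrt (Q x * QY x y)) ^ 2 := by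
    calc ∑ x, P x * (∑ y, (Real.sqrt (PY x y) - Real.sqrt (QY x y)) ^ 2)
        ≤ ∑ x, (2 * ∑ y, (Real.sqrt (P x * PY x y) - Real.sqrt (Q x * QY x y)) ^ 2
            + 2 * (Real.sqrt (P x) - Real.sqrt (Q x)) ^ 2) :=
          Finset.sum_le_sum fun x _ => key1 x
      _ = 2 * (∑ x, ∑ y, (Real.sqrt (P x * PY x y) - Real.sqrt (Q x * QY x y)) ^ 2)
            + 2 * ∑ x, (Real.sqrt (P x) - Real.sqrt (Q x)) ^ 2 := by
          rw [Finset.sum_add_distrib, ← Finset.mul_sum, ← Finset.mul_sum]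
      _ ≤ 2 * (∑ x, ∑ y, (Real.sqrt (P x * PY x y) - Real.sqrt (Q x * QY x y)) ^ 2)
            + 2 * ∑ x, ∑ y, (Real.sqrt (P x * PY x y) - Real.sqrt (Q x * QY x y)) ^ 2 := by
          linarith [keyM]
      _ = 4 * ∑ x, ∑ y, (Real.sqrt (P x * PY x y) - Real.sqrt (Q x * QY x y)) ^ 2 := by ring
  have lhs_eq : ∑ x, P x * (1 / 2 * ∑ y, (Real.sqrt (PY x y) - Real.sqrt (QY x y)) ^ 2)
      = 1 / 2 * ∑ x, P x * (∑ y, (Real.sqrt (PY x y) - Real.sqrt (QY x y)) ^ 2) := by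
    rw [Finset.mul_sum]
    exact Finset.sum_congr rfl fun x _ => by ring
  rw [lhs_eq, hJ]
  linarith [main, hJ0]
end

section
/- Let 𝒪 be a finite nonempty set, P, Q ∈ Δ(𝒪), f : 𝒪 → [0,1], and λ > 0. Then λ·( log E_Q[exp(−f/λ)] − log E_P[exp(−f/λ)] ) ≤ λ · e^{1/λ} · ‖P − Q‖₁. -/
open scoped BigOperators

theorem stmt14 {O : Type*} [Fintype O] [Nonempty O]
    (P Q : O → ℝ) (hP0 : ∀ o, 0 ≤ P o) (hP1 : ∑ o, P o = 1)
    (hQ0 : ∀ o, 0 ≤ Q o) (hQ1 : ∑ o, Q o = 1)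
    (f : O → ℝ) (hf : ∀ o, 0 ≤ f o ∧ f o ≤ 1)
    (lam : ℝ) (hlam : 0 < lam) :
    lam * (Real.log (∑ o, Q o * Real.exp (-f o / lam))
        - Real.log (∑ o, P o * Real.exp (-f o / lam)))
      ≤ lam * Real.exp (1 / lam) * ∑ o, |P o - Q o| := by
  set E : O → ℝ := fun o => Real.exp (-f o / lam) with hE
  have hE0 : ∀ o, 0 < E o := fun o => Real.exp_pos _
  have hE1 : ∀ o, E o ≤ 1 := by
    intro o
    have : -f o / lam ≤ 0 := div_nonpos_of_nonpos_of_nonneg (by linarith [(hf o).1]) hlam.le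
    exact Real.exp_le_one_iff.mpr this
  have hElb : ∀ o, Real.exp (-(1/lam)) ≤ E o := by
    intro o
    apply Real.exp_le_exp.mpr
    rw [neg_div]
    gcongr
    exact (hf o).2
  set A : ℝ := ∑ o, P o * E o with hA
  set B : ℝ := ∑ o, Q o * E o with hB
  have hAlb : Real.exp (-(1/lam)) ≤ A := by
    calc Real.exp (-(1/lam)) = ∑ o, P o * Real.exp (-(1/lam)) := by
          rw [← Finset.sum_mul, hP1, one_mul]
      _ ≤ A := Finset.sum_le_sum fun o _ =>
          mul_le_mul_of_nonneg_left (hElb o) (hP0 o)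
  have hApos : 0 < A := lt_of_lt_of_le (Real.exp_pos _) hAlb
  have hBpos : 0 < B := by
    have : Real.exp (-(1/lam)) ≤ B := by
      calc Real.exp (-(1/lam)) = ∑ o, Q o * Real.exp (-(1/lam)) := by
            rw [← Finset.sum_mul, hQ1, one_mul]
        _ ≤ B := Finset.sum_le_sum fun o _ =>
            mul_le_mul_of_nonneg_left (hElb o) (hQ0 o)
    exact lt_of_lt_of_le (Real.exp_pos _) this
  have hdiff : B - A ≤ ∑ o, |P o - Q o| := by
    calc B - A = ∑ o, (Q o - P o) * E o := by
          rw [hA, hB, ← Finset.sum_sub_distrib]; apply Finset.sum_congr rfl; intros; ring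
      _ ≤ ∑ o, |P o - Q o| := by
          apply Finset.sum_le_sum
          intro o _
          have h1 : (Q o - P o) * E o ≤ |Q o - P o| * 1 :=
            mul_le_mul (le_abs_self _) (hE1 o) (hE0 o).le (abs_nonneg _)
          rw [abs_sub_comm] at h1
          linarith
  have hlog : Real.log B - Real.log A ≤ (B - A) / A := by
    have := Real.log_le_sub_one_of_pos (show 0 < B / A from div_pos hBpos hApos)
    rw [Real.log_div hBpos.ne' hApos.ne'] at this
    have h2 : B / A - 1 = (B - A) / A := by field_simp
    linarith
  have hfin : (B - A) / A ≤ Real.exp (1/lam) * ∑ o, |P o - Q o| := by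
    rcases le_or_gt (B - A) 0 with h | h
    · have : (B - A)/A ≤ 0 := div_nonpos_of_nonpos_of_nonneg h hApos.le
      have hs : 0 ≤ ∑ o, |P o - Q o| := Finset.sum_nonneg fun o _ => abs_nonneg _
      have := mul_nonneg (Real.exp_pos (1/lam)).le hs
      linarith
    · calc (B - A)/A ≤ (B - A)/Real.exp (-(1/lam)) :=
            div_le_div_of_nonneg_left h.le (Real.exp_pos _) hAlb
        _ = Real.exp (1/lam) * (B - A) := by
            rw [Real.exp_neg]; field_simp
        _ ≤ Real.exp (1/lam) * ∑ o, |P o - Q o| :=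
            mul_le_mul_of_nonneg_left hdiff (Real.exp_pos _).le
  calc lam * (Real.log B - Real.log A) ≤ lam * ((B-A)/A) :=
        mul_le_mul_of_nonneg_left hlog hlam.le
    _ ≤ lam * (Real.exp (1/lam) * ∑ o, |P o - Q o|) :=
        mul_le_mul_of_nonneg_left hfin hlam.le
    _ = lam * Real.exp (1 / lam) * ∑ o, |P o - Q o| := by ring
end

section
/- Let 𝒪 be a finite nonempty set, P, Q ∈ Δ(𝒪), V : 𝒪 → [0,1], and ξ ≥ 0. Then | inf { E_{P′}[V] : P′ ∈ Δ(𝒪), TV(P′, P) ≤ ξ } − inf { E_{Q′}[V] : Q′ ∈ Δ(𝒪), TV(Q′, Q) ≤ ξ } | ≤ ‖P − Q‖₁. -/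
open scoped BigOperators

private lemma aux15 {O : Type*} [Fintype O] [Nonempty O]
    (P Q : O → ℝ) (hP0 : ∀ o, 0 ≤ P o) (hP1 : ∑ o, P o = 1)
    (hQ0 : ∀ o, 0 ≤ Q o) (hQ1 : ∑ o, Q o = 1)
    (V : O → ℝ) (hV : ∀ o, 0 ≤ V o ∧ V o ≤ 1)
    (ξ : ℝ) (hξ : 0 ≤ ξ) :
    sInf {w : ℝ | ∃ P' : O → ℝ, (∀ o, 0 ≤ P' o) ∧ (∑ o, P' o = 1) ∧
          (∑ o, |P' o - P o|) / 2 ≤ ξ ∧ w = ∑ o, P' o * V o}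
      ≤ sInf {w : ℝ | ∃ Q' : O → ℝ, (∀ o, 0 ≤ Q' o) ∧ (∑ o, Q' o = 1) ∧
          (∑ o, |Q' o - Q o|) / 2 ≤ ξ ∧ w = ∑ o, Q' o * V o}
        + ∑ o, |P o - Q o| := by
  set SP := {w : ℝ | ∃ P' : O → ℝ, (∀ o, 0 ≤ P' o) ∧ (∑ o, P' o = 1) ∧
          (∑ o, |P' o - P o|) / 2 ≤ ξ ∧ w = ∑ o, P' o * V o} with hSP
  have hBddP : BddBelow SP := by
    refine ⟨0, fun w hw => ?_⟩
    obtain ⟨P', h0, -, -, rfl⟩ := hw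
    exact Finset.sum_nonneg fun o _ => mul_nonneg (h0 o) (hV o).1
  have hneQ : Set.Nonempty {w : ℝ | ∃ Q' : O → ℝ, (∀ o, 0 ≤ Q' o) ∧ (∑ o, Q' o = 1) ∧
          (∑ o, |Q' o - Q o|) / 2 ≤ ξ ∧ w = ∑ o, Q' o * V o} := by
    refine ⟨∑ o, Q o * V o, Q, hQ0, hQ1, ?_, rfl⟩
    simp [hξ]
  rw [← sub_le_iff_le_add]
  refine le_csInf hneQ fun w hw => ?_
  rw [sub_le_iff_le_add]
  obtain ⟨Q', h0, h1, hTV, rfl⟩ := hw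
  set s := ∑ o, |P o - Q o| with hs
  have hs0 : 0 ≤ s := Finset.sum_nonneg fun o _ => abs_nonneg _
  have hQ'Q : ∑ o, |Q' o - Q o| ≤ 2 * ξ := by linarith
  have htri : ∑ o, |Q' o - P o| ≤ 2 * ξ + s := by
    have : ∀ o ∈ Finset.univ, |Q' o - P o| ≤ |Q' o - Q o| + |P o - Q o| := by
      intro o _
      have := abs_sub_abs_le_abs_sub (Q' o) (P o)
      calc |Q' o - P o| = |(Q' o - Q o) - (P o - Q o)| := by ring_nf
        _ ≤ |Q' o - Q o| + |P o - Q o| := abs_sub _ _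
    calc ∑ o, |Q' o - P o| ≤ ∑ o, (|Q' o - Q o| + |P o - Q o|) :=
          Finset.sum_le_sum this
      _ = (∑ o, |Q' o - Q o|) + s := by rw [Finset.sum_add_distrib]
      _ ≤ 2 * ξ + s := by linarith
  rcases eq_or_lt_of_le hs0 with hz | hpos
  · -- s = 0 : P = Q, use Q' directly
    have hPQ : ∀ o, P o = Q o := by
      intro o
      have := (Finset.sum_eq_zero_iff_of_nonneg
        (fun o _ => abs_nonneg (P o - Q o))).mp hz.symm o (Finset.mem_univ o)
      have := abs_eq_zero.mp this
      linarith
    have hmem : (∑ o, Q' o * V o) ∈ SP := by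
      refine ⟨Q', h0, h1, ?_, rfl⟩
      have : ∑ o, |Q' o - P o| = ∑ o, |Q' o - Q o| :=
        Finset.sum_congr rfl fun o _ => by rw [hPQ o]
      rw [this]; exact hTV
    have := csInf_le hBddP hmem
    linarith
  · -- s > 0 : mix
    have hden : 0 < 2 * ξ + s := by linarith
    set t := s / (2 * ξ + s) with ht
    have ht0 : 0 ≤ t := div_nonneg hs0 hden.le
    have ht1 : t ≤ 1 := (div_le_one hden).mpr (by linarith)
    have htden : t * (2 * ξ + s) = s := div_mul_cancel₀ s hden.ne'
    set P' := fun o => (1 - t) * Q' o + t * P o with hP'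
    have hmem : (∑ o, P' o * V o) ∈ SP := by
      refine ⟨P', fun o => add_nonneg (mul_nonneg (by linarith) (h0 o))
        (mul_nonneg ht0 (hP0 o)), ?_, ?_, rfl⟩
      · rw [Finset.sum_add_distrib, ← Finset.mul_sum, ← Finset.mul_sum, h1, hP1]
        ring
      · have key : ∀ o, |P' o - P o| = (1 - t) * |Q' o - P o| := by
          intro o
          have : P' o - P o = (1 - t) * (Q' o - P o) := by simp [hP']; ring
          rw [this, abs_mul, abs_of_nonneg (by linarith : (0:ℝ) ≤ 1 - t)]
        have : ∑ o, |P' o - P o| = (1 - t) * ∑ o, |Q' o - P o| := by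
          rw [Finset.mul_sum]; exact Finset.sum_congr rfl fun o _ => key o
        rw [this]
        have h2 : (1 - t) * ∑ o, |Q' o - P o| ≤ (1 - t) * (2 * ξ + s) :=
          mul_le_mul_of_nonneg_left htri (by linarith)
        have h3 : (1 - t) * (2 * ξ + s) = 2 * ξ := by
          have : (1 - t) * (2 * ξ + s) = (2 * ξ + s) - t * (2 * ξ + s) := by ring
          rw [this, htden]; ring
        linarith
    have hval : ∑ o, P' o * V o ≤ (∑ o, Q' o * V o) + s := by
      have hdiff : (∑ o, P' o * V o) - ∑ o, Q' o * V o
          = t * ∑ o, (P o - Q' o) * V o := by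
        rw [Finset.mul_sum, ← Finset.sum_sub_distrib]
        exact Finset.sum_congr rfl fun o _ => by simp [hP']; ring
      have hbd : ∑ o, (P o - Q' o) * V o ≤ ∑ o, |P o - Q' o| := by
        refine Finset.sum_le_sum fun o _ => ?_
        calc (P o - Q' o) * V o ≤ |(P o - Q' o) * V o| := le_abs_self _
          _ = |P o - Q' o| * |V o| := abs_mul _ _
          _ ≤ |P o - Q' o| * 1 := by
              exact mul_le_mul_of_nonneg_left
                (abs_le.mpr ⟨by linarith [(hV o).1], (hV o).2⟩) (abs_nonneg _)
          _ = |P o - Q' o| := mul_one _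
      have habs : ∑ o, |P o - Q' o| = ∑ o, |Q' o - P o| :=
        Finset.sum_congr rfl fun o _ => abs_sub_comm _ _
      have : (∑ o, P' o * V o) - ∑ o, Q' o * V o ≤ t * (2 * ξ + s) := by
        rw [hdiff]
        calc t * ∑ o, (P o - Q' o) * V o ≤ t * ∑ o, |P o - Q' o| :=
              mul_le_mul_of_nonneg_left hbd ht0
          _ = t * ∑ o, |Q' o - P o| := by rw [habs]
          _ ≤ t * (2 * ξ + s) := mul_le_mul_of_nonneg_left htri ht0
      linarith [htden]
    exact le_trans (csInf_le hBddP hmem) hval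

theorem stmt15 {O : Type*} [Fintype O] [Nonempty O]
    (P Q : O → ℝ) (hP0 : ∀ o, 0 ≤ P o) (hP1 : ∑ o, P o = 1)
    (hQ0 : ∀ o, 0 ≤ Q o) (hQ1 : ∑ o, Q o = 1)
    (V : O → ℝ) (hV : ∀ o, 0 ≤ V o ∧ V o ≤ 1)
    (ξ : ℝ) (hξ : 0 ≤ ξ) :
    |sInf {w : ℝ | ∃ P' : O → ℝ, (∀ o, 0 ≤ P' o) ∧ (∑ o, P' o = 1) ∧
          (∑ o, |P' o - P o|) / 2 ≤ ξ ∧ w = ∑ o, P' o * V o}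
        - sInf {w : ℝ | ∃ Q' : O → ℝ, (∀ o, 0 ≤ Q' o) ∧ (∑ o, Q' o = 1) ∧
          (∑ o, |Q' o - Q o|) / 2 ≤ ξ ∧ w = ∑ o, Q' o * V o}|
      ≤ ∑ o, |P o - Q o| := by
  have h1 := aux15 P Q hP0 hP1 hQ0 hQ1 V hV ξ hξ
  have h2 := aux15 Q P hQ0 hQ1 hP0 hP1 V hV ξ hξ
  have hsym : ∑ o, |Q o - P o| = ∑ o, |P o - Q o| :=
    Finset.sum_congr rfl fun o _ => abs_sub_comm _ _
  rw [abs_sub_le_iff]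
  constructor <;> linarith
end

section
/- Let 𝒪 be a finite nonempty set, P, Q ∈ Δ(𝒪), V : 𝒪 → [0,1], and ξ > 0. For μ ∈ Δ(𝒪) define ψ_μ := sup_{λ>0} { −λ·log E_μ[exp(−V/λ)] − λξ }. Suppose some λ_P > 0 attains the supremum defining ψ_P, and let λ* satisfy 0 < λ* ≤ λ_P. Then ψ_P − ψ_Q ≤ max{ e^ξ/ξ, λ*·e^{1/λ*} } · ‖P − Q‖₁. -/
open scoped BigOperators

lemma g_dec16 {a b : ℝ} (ha : 0 < a) (hab : a ≤ b) (hb1 : b ≤ 1) :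
    b * Real.exp (1 / b) ≤ a * Real.exp (1 / a) := by
  have hb : 0 < b := lt_of_lt_of_le ha hab
  have hlog : Real.log (b / a) ≤ b / a - 1 := Real.log_le_sub_one_of_pos (by positivity)
  rw [Real.log_div hb.ne' ha.ne'] at hlog
  have h1 : Real.log b - Real.log a ≤ 1 / a - 1 / b := by
    have h2 : b / a - 1 ≤ 1 / a - 1 / b := by
      rw [div_sub_one ha.ne', div_sub_div _ _ ha.ne' hb.ne',
        div_le_div_iff₀ ha (mul_pos ha hb)]
      nlinarith [mul_nonneg (mul_nonneg (sub_nonneg.2 hab) ha.le) (sub_nonneg.2 hb1)]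
    linarith
  calc b * Real.exp (1 / b) = Real.exp (Real.log b + 1 / b) := by
        rw [Real.exp_add, Real.exp_log hb]
    _ ≤ Real.exp (Real.log a + 1 / a) := by apply Real.exp_le_exp.2; linarith
    _ = a * Real.exp (1 / a) := by rw [Real.exp_add, Real.exp_log ha]

lemma g_inc16 {a b : ℝ} (ha : 1 ≤ a) (hab : a ≤ b) :
    a * Real.exp (1 / a) ≤ b * Real.exp (1 / b) := by
  have ha0 : (0:ℝ) < a := lt_of_lt_of_le one_pos ha
  have hb : 0 < b := lt_of_lt_of_le ha0 hab
  have hlog : Real.log (a / b) ≤ a / b - 1 := Real.log_le_sub_one_of_pos (by positivity)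
  rw [Real.log_div ha0.ne' hb.ne'] at hlog
  have h1 : Real.log a - Real.log b ≤ 1 / b - 1 / a := by
    have h2 : a / b - 1 ≤ 1 / b - 1 / a := by
      rw [div_sub_one hb.ne', div_sub_div _ _ hb.ne' ha0.ne',
        div_le_div_iff₀ hb (mul_pos hb ha0)]
      nlinarith [mul_nonneg (mul_nonneg (sub_nonneg.2 hab) hb.le) (sub_nonneg.2 ha)]
    linarith
  calc a * Real.exp (1 / a) = Real.exp (Real.log a + 1 / a) := by
        rw [Real.exp_add, Real.exp_log ha0]
    _ ≤ Real.exp (Real.log b + 1 / b) := by apply Real.exp_le_exp.2; linarith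
    _ = b * Real.exp (1 / b) := by rw [Real.exp_add, Real.exp_log hb]

theorem stmt16 {O : Type*} [Fintype O] [Nonempty O]
    (P Q : O → ℝ) (hP0 : ∀ o, 0 ≤ P o) (hP1 : ∑ o, P o = 1)
    (hQ0 : ∀ o, 0 ≤ Q o) (hQ1 : ∑ o, Q o = 1)
    (V : O → ℝ) (hV : ∀ o, 0 ≤ V o ∧ V o ≤ 1)
    (ξ : ℝ) (hξ : 0 < ξ)
    (lamP lamstar : ℝ) (hlamP : 0 < lamP) (hlamstar : 0 < lamstar) (hle : lamstar ≤ lamP)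
    (hatt : IsGreatest
      {w : ℝ | ∃ lam : ℝ, 0 < lam ∧
        w = -lam * Real.log (∑ o, P o * Real.exp (-V o / lam)) - lam * ξ}
      (-lamP * Real.log (∑ o, P o * Real.exp (-V o / lamP)) - lamP * ξ)) :
    sSup {w : ℝ | ∃ lam : ℝ, 0 < lam ∧
        w = -lam * Real.log (∑ o, P o * Real.exp (-V o / lam)) - lam * ξ}
      - sSup {w : ℝ | ∃ lam : ℝ, 0 < lam ∧
        w = -lam * Real.log (∑ o, Q o * Real.exp (-V o / lam)) - lam * ξ}
      ≤ max (Real.exp ξ / ξ) (lamstar * Real.exp (1 / lamstar)) * ∑ o, |P o - Q o| := by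
  -- basic bounds on the sums
  have key : ∀ (μ : O → ℝ), (∀ o, 0 ≤ μ o) → (∑ o, μ o) = 1 → ∀ lam : ℝ, 0 < lam →
      Real.exp (-(1 / lam)) ≤ ∑ o, μ o * Real.exp (-V o / lam) ∧
      (∑ o, μ o * Real.exp (-V o / lam)) ≤ 1 := by
    intro μ hμ0 hμ1 lam hlam
    constructor
    · calc Real.exp (-(1 / lam)) = ∑ o, μ o * Real.exp (-(1 / lam)) := by
            rw [← Finset.sum_mul, hμ1, one_mul]
        _ ≤ _ := by
            apply Finset.sum_le_sum
            intro o _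
            apply mul_le_mul_of_nonneg_left _ (hμ0 o)
            apply Real.exp_le_exp.2
            rw [neg_div]
            apply neg_le_neg
            gcongr
            exact (hV o).2
    · calc (∑ o, μ o * Real.exp (-V o / lam)) ≤ ∑ o, μ o * 1 := by
            apply Finset.sum_le_sum
            intro o _
            apply mul_le_mul_of_nonneg_left _ (hμ0 o)
            apply Real.exp_le_one_iff.2
            apply div_nonpos_of_nonpos_of_nonneg (neg_nonpos.2 (hV o).1) hlam.le
        _ = 1 := by simp [hμ1]
  -- abbreviations
  set A := ∑ o, P o * Real.exp (-V o / lamP) with hA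
  set B := ∑ o, Q o * Real.exp (-V o / lamP) with hB
  have hkP := key P hP0 hP1 lamP hlamP
  have hkQ := key Q hQ0 hQ1 lamP hlamP
  have hApos : 0 < A := lt_of_lt_of_le (Real.exp_pos _) hkP.1
  have hBpos : 0 < B := lt_of_lt_of_le (Real.exp_pos _) hkQ.1
  -- the Q-set is bounded above
  have hQbdd : BddAbove {w : ℝ | ∃ lam : ℝ, 0 < lam ∧
      w = -lam * Real.log (∑ o, Q o * Real.exp (-V o / lam)) - lam * ξ} := by
    refine ⟨1, ?_⟩
    rintro w ⟨lam, hlam, rfl⟩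
    have hk := key Q hQ0 hQ1 lam hlam
    have hlog : -(1/lam) ≤ Real.log (∑ o, Q o * Real.exp (-V o / lam)) := by
      have h := Real.log_le_log (Real.exp_pos _) hk.1
      rwa [Real.log_exp] at h
    have h1 : lam * (1/lam) = 1 := mul_one_div_cancel hlam.ne'
    nlinarith [mul_le_mul_of_nonneg_left hlog hlam.le, mul_pos hlam hξ]
  have hPsup : sSup {w : ℝ | ∃ lam : ℝ, 0 < lam ∧
        w = -lam * Real.log (∑ o, P o * Real.exp (-V o / lam)) - lam * ξ}
      = -lamP * Real.log A - lamP * ξ := hatt.csSup_eq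
  have hQge : -lamP * Real.log B - lamP * ξ ≤ sSup {w : ℝ | ∃ lam : ℝ, 0 < lam ∧
      w = -lam * Real.log (∑ o, Q o * Real.exp (-V o / lam)) - lam * ξ} :=
    le_csSup hQbdd ⟨lamP, hlamP, rfl⟩
  -- the value at lamP is nonnegative
  have h0 : 0 ≤ -lamP * Real.log A - lamP * ξ := by
    by_contra h
    push_neg at h
    set w := -lamP * Real.log A - lamP * ξ with hw
    have hlam' : 0 < -w / (2 * ξ) := div_pos (by linarith) (by positivity)
    have hmem := hatt.2 ⟨-w / (2 * ξ), hlam', rfl⟩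
    have hk := key P hP0 hP1 (-w / (2 * ξ)) hlam'
    have hTpos : 0 < ∑ o, P o * Real.exp (-V o / (-w / (2 * ξ))) :=
      lt_of_lt_of_le (Real.exp_pos _) hk.1
    have hlog : Real.log (∑ o, P o * Real.exp (-V o / (-w / (2 * ξ)))) ≤ 0 :=
      Real.log_nonpos hTpos.le hk.2
    have hc : -w / (2 * ξ) * ξ = -w / 2 := by field_simp
    have h1 : 0 ≤ -(-w / (2 * ξ)) * Real.log (∑ o, P o * Real.exp (-V o / (-w / (2 * ξ)))) :=
      by nlinarith [mul_nonneg hlam'.le (neg_nonneg.2 hlog)]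
    linarith
  -- upper bound on the value, giving lamP ≤ 1/ξ
  have hlogA : -(1/lamP) ≤ Real.log A := by
    have h := Real.log_le_log (Real.exp_pos _) hkP.1
    rwa [Real.log_exp] at h
  have hup : -lamP * Real.log A ≤ 1 := by
    have h1 : lamP * (1/lamP) = 1 := mul_one_div_cancel hlamP.ne'
    nlinarith [mul_le_mul_of_nonneg_left hlogA hlamP.le]
  have hlamPξ : lamP ≤ 1 / ξ := by
    rw [le_div_iff₀ hξ]
    nlinarith
  -- bound on the log difference
  have hlogBA : Real.log B - Real.log A ≤ (B - A) / A := by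
    have h := Real.log_le_sub_one_of_pos (show (0:ℝ) < B / A by positivity)
    rw [Real.log_div hBpos.ne' hApos.ne'] at h
    have h2 : B / A - 1 = (B - A) / A := by field_simp
    linarith
  have hinvA : 1 / A ≤ Real.exp (1 / lamP) := by
    have h := one_div_le_one_div_of_le (Real.exp_pos _) hkP.1
    rwa [one_div (Real.exp _), ← Real.exp_neg, neg_neg] at h
  have hAB : |B - A| ≤ ∑ o, |P o - Q o| := by
    have hBA : B - A = ∑ o, (Q o - P o) * Real.exp (-V o / lamP) := by
      rw [hA, hB, ← Finset.sum_sub_distrib]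
      exact Finset.sum_congr rfl fun o _ => by ring
    rw [hBA]
    calc |∑ o, (Q o - P o) * Real.exp (-V o / lamP)|
        ≤ ∑ o, |(Q o - P o) * Real.exp (-V o / lamP)| := Finset.abs_sum_le_sum_abs _ _
      _ ≤ ∑ o, |P o - Q o| := by
          apply Finset.sum_le_sum
          intro o _
          rw [abs_mul, abs_sub_comm]
          have he : |Real.exp (-V o / lamP)| ≤ 1 := by
            rw [abs_of_pos (Real.exp_pos _)]
            exact Real.exp_le_one_iff.2
              (div_nonpos_of_nonpos_of_nonneg (neg_nonpos.2 (hV o).1) hlamP.le)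
          nlinarith [abs_nonneg (P o - Q o), abs_nonneg (Real.exp (-V o / lamP))]
  have hsum_nonneg : (0:ℝ) ≤ ∑ o, |P o - Q o| :=
    Finset.sum_nonneg fun o _ => abs_nonneg _
  -- quasiconvexity bound
  have hg : lamP * Real.exp (1 / lamP)
      ≤ max (Real.exp ξ / ξ) (lamstar * Real.exp (1 / lamstar)) := by
    rcases le_or_gt lamP 1 with h1 | h1
    · exact le_max_of_le_right (g_dec16 hlamstar hle h1)
    · refine le_max_of_le_left ?_
      have h2 := g_inc16 h1.le hlamPξ
      calc lamP * Real.exp (1 / lamP) ≤ (1/ξ) * Real.exp (1 / (1/ξ)) := h2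
        _ = Real.exp ξ / ξ := by rw [one_div_one_div]; ring
  -- assemble
  rw [hPsup]
  have hmain : (-lamP * Real.log A - lamP * ξ) - (-lamP * Real.log B - lamP * ξ)
      ≤ max (Real.exp ξ / ξ) (lamstar * Real.exp (1 / lamstar)) * ∑ o, |P o - Q o| := by
    have e1 : (-lamP * Real.log A - lamP * ξ) - (-lamP * Real.log B - lamP * ξ)
        = lamP * (Real.log B - Real.log A) := by ring
    rw [e1]
    calc lamP * (Real.log B - Real.log A)
        ≤ lamP * ((B - A) / A) := mul_le_mul_of_nonneg_left hlogBA hlamP.le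
      _ ≤ lamP * (|B - A| * Real.exp (1 / lamP)) := by
          apply mul_le_mul_of_nonneg_left _ hlamP.le
          calc (B - A) / A ≤ |B - A| / A := by
                gcongr
                exact le_abs_self _
            _ = |B - A| * (1 / A) := by ring
            _ ≤ |B - A| * Real.exp (1 / lamP) :=
                mul_le_mul_of_nonneg_left hinvA (abs_nonneg _)
      _ ≤ lamP * Real.exp (1 / lamP) * ∑ o, |P o - Q o| := by
          rw [mul_assoc, mul_comm (Real.exp (1 / lamP))]
          exact mul_le_mul_of_nonneg_left
            (mul_le_mul_of_nonneg_right hAB (Real.exp_pos _).le) hlamP.le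
      _ ≤ _ := mul_le_mul_of_nonneg_right hg hsum_nonneg
  linarith
end

section
/- Let 𝒳 be a finite nonempty set, P, Q ∈ Δ(𝒳), ε ≥ 0, and let P̄ : 𝒳 → [0,∞) satisfy ∑_{x∈𝒳} |P(x) − P̄(x)| ≤ ε and ∑_{x∈𝒳} √(P̄(x)·Q(x)) > 0. Then D_H²(P, Q) ≤ −log( ∑_{x∈𝒳} √(P̄(x)·Q(x)) ) + √ε. -/
open scoped BigOperators

lemma sq_sqrt_sub_le {a b : ℝ} (ha : 0 ≤ a) (hb : 0 ≤ b) :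
    (Real.sqrt a - Real.sqrt b) ^ 2 ≤ |a - b| := by
  have h1 : |Real.sqrt a - Real.sqrt b| ≤ Real.sqrt a + Real.sqrt b := by
    have := Real.sqrt_nonneg a
    have := Real.sqrt_nonneg b
    rw [abs_le]; constructor <;> nlinarith
  calc (Real.sqrt a - Real.sqrt b) ^ 2 = |Real.sqrt a - Real.sqrt b| ^ 2 := (sq_abs _).symm
    _ ≤ |Real.sqrt a - Real.sqrt b| * (Real.sqrt a + Real.sqrt b) := by
        rw [sq]
        exact mul_le_mul_of_nonneg_left h1 (abs_nonneg _)
    _ = |(Real.sqrt a - Real.sqrt b) * (Real.sqrt a + Real.sqrt b)| := by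
        rw [abs_mul, abs_of_nonneg (add_nonneg (Real.sqrt_nonneg a) (Real.sqrt_nonneg b))]
    _ = |a - b| := by
        rw [show (Real.sqrt a - Real.sqrt b) * (Real.sqrt a + Real.sqrt b)
            = Real.sqrt a ^ 2 - Real.sqrt b ^ 2 by ring, Real.sq_sqrt ha, Real.sq_sqrt hb]

theorem stmt18 {X : Type*} [Fintype X] [Nonempty X]
    (P Q : X → ℝ) (hP0 : ∀ x, 0 ≤ P x) (hP1 : ∑ x, P x = 1)
    (hQ0 : ∀ x, 0 ≤ Q x) (hQ1 : ∑ x, Q x = 1)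
    (ε : ℝ) (hε : 0 ≤ ε)
    (Pbar : X → ℝ) (hPbar : ∀ x, 0 ≤ Pbar x)
    (hclose : ∑ x, |P x - Pbar x| ≤ ε)
    (hpos : 0 < ∑ x, Real.sqrt (Pbar x * Q x)) :
    1 / 2 * ∑ x, (Real.sqrt (P x) - Real.sqrt (Q x)) ^ 2
      ≤ -Real.log (∑ x, Real.sqrt (Pbar x * Q x)) + Real.sqrt ε := by
  set a : X → ℝ := fun x => Real.sqrt (Pbar x) - Real.sqrt (P x) with ha
  -- LHS equals 1 - ∑ √(P x)√(Q x)
  have hLHS : 1 / 2 * ∑ x, (Real.sqrt (P x) - Real.sqrt (Q x)) ^ 2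
      = 1 - ∑ x, Real.sqrt (P x) * Real.sqrt (Q x) := by
    have : ∀ x, (Real.sqrt (P x) - Real.sqrt (Q x)) ^ 2
        = P x + Q x - 2 * (Real.sqrt (P x) * Real.sqrt (Q x)) := by
      intro x
      have := Real.sq_sqrt (hP0 x)
      have := Real.sq_sqrt (hQ0 x)
      nlinarith
    simp only [this]
    rw [Finset.sum_sub_distrib, Finset.sum_add_distrib, hP1, hQ1, ← Finset.mul_sum]
    ring
  -- ∑ a² ≤ ε
  have hsumsq : ∑ x, a x ^ 2 ≤ ε := by
    refine le_trans (le_trans (Finset.sum_le_sum ?_) hclose) le_rfl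
    intro x _
    have := sq_sqrt_sub_le (hPbar x) (hP0 x)
    rw [abs_sub_comm]
    exact this
  -- Cauchy–Schwarz step
  have hCS : ∑ x, Real.sqrt (Pbar x * Q x) - ∑ x, Real.sqrt (P x) * Real.sqrt (Q x)
      ≤ Real.sqrt ε := by
    have key : ∑ x, Real.sqrt (Pbar x * Q x) - ∑ x, Real.sqrt (P x) * Real.sqrt (Q x)
        = ∑ x, a x * Real.sqrt (Q x) := by
      rw [← Finset.sum_sub_distrib]
      refine Finset.sum_congr rfl fun x _ => ?_
      rw [Real.sqrt_mul (hPbar x)]; ring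
    rw [key]
    have habs : ∑ x, a x * Real.sqrt (Q x) ≤ ∑ x, |a x| * Real.sqrt (Q x) := by
      refine Finset.sum_le_sum fun x _ => ?_
      exact mul_le_mul_of_nonneg_right (le_abs_self _) (Real.sqrt_nonneg _)
    refine habs.trans ?_
    have h2 : (∑ x, |a x| * Real.sqrt (Q x)) ^ 2
        ≤ (∑ x, |a x| ^ 2) * ∑ x, Real.sqrt (Q x) ^ 2 :=
      Finset.sum_mul_sq_le_sq_mul_sq Finset.univ _ _
    have hq : ∑ x, Real.sqrt (Q x) ^ 2 = 1 := by
      rw [← hQ1]; exact Finset.sum_congr rfl fun x _ => Real.sq_sqrt (hQ0 x)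
    have h3 : (∑ x, |a x| * Real.sqrt (Q x)) ^ 2 ≤ ε := by
      rw [hq, mul_one] at h2
      refine h2.trans ?_
      simpa [sq_abs] using hsumsq
    have hnn : 0 ≤ ∑ x, |a x| * Real.sqrt (Q x) :=
      Finset.sum_nonneg fun x _ => mul_nonneg (abs_nonneg _) (Real.sqrt_nonneg _)
    calc ∑ x, |a x| * Real.sqrt (Q x)
        = Real.sqrt ((∑ x, |a x| * Real.sqrt (Q x)) ^ 2) := by
          rw [Real.sqrt_sq hnn]
      _ ≤ Real.sqrt ε := Real.sqrt_le_sqrt h3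
  have hlog : Real.log (∑ x, Real.sqrt (Pbar x * Q x))
      ≤ (∑ x, Real.sqrt (Pbar x * Q x)) - 1 := Real.log_le_sub_one_of_pos hpos
  rw [hLHS]
  linarith
end

section
/- Let 𝒳 be a finite nonempty set with |𝒳| = M, let p* ∈ Δ(𝒳), let δ ∈ (0,1), let N ≥ 2 be an integer, and let 0 < p_min < δ/M². Let X₁, …, X_N be independent random variables each with law p*. Then with probability at least 1 − δ the following holds: every q ∈ Δ(𝒳) satisfying ∑_{n=1}^N (−log q(X_n)) ≤ ∑_{n=1}^N (−log p*(X_n)) also satisfies |{ n ∈ {1,…,N} : q(X_n) ≥ p_min }| ≥ N/2. -/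
open Classical
open scoped BigOperators

/-- `−log r`, valued in `EReal`, interpreted as `+∞` when `r ≤ 0`. -/
noncomputable def negLogE (r : ℝ) : EReal :=
  if r ≤ 0 then ⊤ else ((-Real.log r : ℝ) : EReal)

lemma negLogE_of_pos {r : ℝ} (h : 0 < r) : negLogE r = ((-Real.log r : ℝ) : EReal) := by
  simp [negLogE, not_le.2 h]

lemma erealCoeSum {ι : Type*} (s : Finset ι) (f : ι → ℝ) :
    ((∑ i ∈ s, f i : ℝ) : EReal) = ∑ i ∈ s, ((f i : ℝ) : EReal) := by
  classical
  induction s using Finset.cons_induction with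
  | empty => simp
  | cons a s ha ih => rw [Finset.sum_cons, Finset.sum_cons, EReal.coe_add, ih]

theorem stmt19 {X : Type*} [Fintype X] [Nonempty X]
    (pstar : X → ℝ) (hp0 : ∀ x, 0 ≤ pstar x) (hp1 : ∑ x, pstar x = 1)
    (M : ℕ) (hM : Fintype.card X = M)
    (δ : ℝ) (hδ0 : 0 < δ) (hδ1 : δ < 1)
    (N : ℕ) (hN : 2 ≤ N)
    (pmin : ℝ) (hpm0 : 0 < pmin) (hpm1 : pmin < δ / (M : ℝ) ^ 2) :
    1 - δ ≤ ∑ ω : Fin N → X,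
      (if ∀ q : X → ℝ, (∀ x, 0 ≤ q x) → (∑ x, q x) = 1 →
            (∑ n : Fin N, negLogE (q (ω n))) ≤ (∑ n : Fin N, negLogE (pstar (ω n))) →
            (N : ℝ) / 2 ≤ ((Finset.univ.filter fun n : Fin N => pmin ≤ q (ω n)).card : ℝ)
        then ∏ n : Fin N, pstar (ω n) else 0) := by
  classical
  have hM1 : 1 ≤ M := by rw [← hM]; exact Fintype.card_pos
  have hM1' : (1 : ℝ) ≤ (M : ℝ) := by exact_mod_cast hM1
  have hMsq : (1 : ℝ) ≤ (M : ℝ) ^ 2 := one_le_pow₀ hM1'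
  have hMpos : (0 : ℝ) < (M : ℝ) ^ 2 := lt_of_lt_of_le one_pos hMsq
  have hMp : (M : ℝ) ^ 2 * pmin < δ := by
    have := (lt_div_iff₀ hMpos).1 hpm1
    linarith
  have hpm1' : pmin < 1 := by nlinarith
  set P : (Fin N → X) → ℝ := fun ω => ∏ n, pstar (ω n) with hPdef
  have hPnn : ∀ ω, 0 ≤ P ω := fun ω => Finset.prod_nonneg fun n _ => hp0 _
  have hPsum : ∑ ω : Fin N → X, P ω = 1 := by
    have := (Fintype.sum_pow pstar N).symm
    simpa [hp1] using this
  -- the key pointwise claim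
  have key : ∀ ω : Fin N → X, pmin ^ N < (P ω) ^ 2 →
      ∀ q : X → ℝ, (∀ x, 0 ≤ q x) → (∑ x, q x) = 1 →
        (∑ n : Fin N, negLogE (q (ω n))) ≤ (∑ n : Fin N, negLogE (pstar (ω n))) →
        (N : ℝ) / 2 ≤ ((Finset.univ.filter fun n : Fin N => pmin ≤ q (ω n)).card : ℝ) := by
    intro ω hω q hq0 hq1 hle
    by_contra hcard
    push_neg at hcard
    have hPpos : 0 < P ω := by
      rcases lt_or_eq_of_le (hPnn ω) with h | h
      · exact h
      · exfalso; rw [← h] at hω; simp at hω; nlinarith [pow_pos hpm0 N]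
    have hstarpos : ∀ n : Fin N, 0 < pstar (ω n) := by
      intro n
      rcases lt_or_eq_of_le (hp0 (ω n)) with h | h
      · exact h
      · exfalso
        have : P ω = 0 := Finset.prod_eq_zero (Finset.mem_univ n) h.symm
        rw [this] at hPpos; exact lt_irrefl 0 hPpos
    have hRHS : (∑ n : Fin N, negLogE (pstar (ω n)))
        = ((∑ n : Fin N, -Real.log (pstar (ω n)) : ℝ) : EReal) := by
      rw [erealCoeSum]
      exact Finset.sum_congr rfl fun n _ => negLogE_of_pos (hstarpos n)
    have hq1' : ∀ x, q x ≤ 1 := by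
      intro x
      rw [← hq1]
      exact Finset.single_le_sum (fun i _ => hq0 i) (Finset.mem_univ x)
    -- each q (ω n) is positive
    have hqpos : ∀ n : Fin N, 0 < q (ω n) := by
      intro n
      by_contra hn
      push_neg at hn
      have htop : negLogE (q (ω n)) = ⊤ := by simp [negLogE, hn]
      have hnn : ∀ m : Fin N, (0 : EReal) ≤ negLogE (q (ω m)) := by
        intro m
        by_cases h : q (ω m) ≤ 0
        · simp [negLogE, h]
        · push_neg at h
          rw [negLogE_of_pos h]
          have : Real.log (q (ω m)) ≤ 0 := Real.log_nonpos (le_of_lt h) (hq1' _)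
          exact_mod_cast neg_nonneg.2 this
      have : (⊤ : EReal) ≤ ∑ m : Fin N, negLogE (q (ω m)) := by
        rw [← htop]
        exact Finset.single_le_sum (fun m _ => hnn m) (Finset.mem_univ n)
      rw [top_le_iff] at this
      rw [this, hRHS, top_le_iff] at hle
      exact (EReal.coe_ne_top _) hle
    have hLHS : (∑ n : Fin N, negLogE (q (ω n)))
        = ((∑ n : Fin N, -Real.log (q (ω n)) : ℝ) : EReal) := by
      rw [erealCoeSum]
      exact Finset.sum_congr rfl fun n _ => negLogE_of_pos (hqpos n)
    rw [hLHS, hRHS, EReal.coe_le_coe_iff] at hle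
    -- now work in ℝ
    set A : Finset (Fin N) := Finset.univ.filter fun n : Fin N => pmin ≤ q (ω n) with hA
    set B : Finset (Fin N) := Finset.univ.filter fun n : Fin N => ¬ pmin ≤ q (ω n) with hB
    have hAB : A.card + B.card = N := by
      rw [hA, hB, Finset.card_filter_add_card_filter_not]
      simp
    have hsplit : ∑ n : Fin N, -Real.log (q (ω n))
        = ∑ n ∈ A, -Real.log (q (ω n)) + ∑ n ∈ B, -Real.log (q (ω n)) :=
      (Finset.sum_filter_add_sum_filter_not _ _ _).symm
    have hApos : 0 ≤ ∑ n ∈ A, -Real.log (q (ω n)) :=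
      Finset.sum_nonneg fun n _ =>
        neg_nonneg.2 (Real.log_nonpos (le_of_lt (hqpos n)) (hq1' _))
    have hBbound : (B.card : ℝ) * (-Real.log pmin) ≤ ∑ n ∈ B, -Real.log (q (ω n)) := by
      rw [← nsmul_eq_mul]
      refine Finset.card_nsmul_le_sum _ _ _ ?_
      intro n hn
      rw [hB, Finset.mem_filter] at hn
      push_neg at hn
      have := Real.log_lt_log (hqpos n) hn.2
      linarith
    have hlogpm : 0 < -Real.log pmin := by
      have := Real.log_neg hpm0 hpm1'
      linarith
    have hRHSval : ∑ n : Fin N, -Real.log (pstar (ω n)) = -Real.log (P ω) := by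
      rw [hPdef, Real.log_prod (fun n _ => ne_of_gt (hstarpos n))]
      simp [Finset.sum_neg_distrib]
    have hRHSsmall : -Real.log (P ω) < (N : ℝ) / 2 * (-Real.log pmin) := by
      have h1 : Real.log (pmin ^ N) < Real.log ((P ω) ^ 2) :=
        Real.log_lt_log (pow_pos hpm0 N) hω
      rw [Real.log_pow, Real.log_pow] at h1
      push_cast at h1
      linarith
    have hBcard : (N : ℝ) / 2 < (B.card : ℝ) := by
      have : (A.card : ℝ) + (B.card : ℝ) = (N : ℝ) := by exact_mod_cast hAB
      linarith
    nlinarith [hsplit, hle, hRHSval]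
  -- counting
  set G : Finset (Fin N → X) := Finset.univ.filter fun ω => pmin ^ N < (P ω) ^ 2 with hG
  set Bd : Finset (Fin N → X) := Finset.univ.filter fun ω => ¬ pmin ^ N < (P ω) ^ 2 with hBd
  have hsplit : ∑ ω ∈ G, P ω + ∑ ω ∈ Bd, P ω = 1 := by
    rw [hG, hBd, Finset.sum_filter_add_sum_filter_not, hPsum]
  have hBadBound : ∑ ω ∈ Bd, P ω ≤ δ := by
    have h1 : ∀ ω ∈ Bd, P ω ≤ Real.sqrt (pmin ^ N) := by
      intro ω hω
      rw [hBd, Finset.mem_filter] at hω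
      push_neg at hω
      calc P ω = Real.sqrt ((P ω) ^ 2) := (Real.sqrt_sq (hPnn ω)).symm
        _ ≤ Real.sqrt (pmin ^ N) := Real.sqrt_le_sqrt hω.2
    calc ∑ ω ∈ Bd, P ω ≤ ∑ _ω ∈ Bd, Real.sqrt (pmin ^ N) := Finset.sum_le_sum h1
      _ = (Bd.card : ℝ) * Real.sqrt (pmin ^ N) := by rw [Finset.sum_const, nsmul_eq_mul]
      _ ≤ ((M ^ N : ℕ) : ℝ) * Real.sqrt (pmin ^ N) := by
          apply mul_le_mul_of_nonneg_right _ (Real.sqrt_nonneg _)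
          have : Bd.card ≤ Fintype.card (Fin N → X) := Finset.card_le_univ _
          rw [Fintype.card_fun, Fintype.card_fin, hM] at this
          exact_mod_cast this
      _ = Real.sqrt (((M : ℝ) ^ 2 * pmin) ^ N) := by
          have h2 : ((M : ℝ) ^ 2 * pmin) ^ N = ((M : ℝ) ^ N) ^ 2 * pmin ^ N := by ring
          rw [h2, Real.sqrt_mul (sq_nonneg _), Real.sqrt_sq (by positivity)]
          push_cast; ring
      _ ≤ Real.sqrt (((M : ℝ) ^ 2 * pmin) ^ 2) := by
          apply Real.sqrt_le_sqrt
          exact pow_le_pow_of_le_one (by positivity) (le_of_lt (lt_trans hMp hδ1)) hN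
      _ = (M : ℝ) ^ 2 * pmin := Real.sqrt_sq (by positivity)
      _ ≤ δ := le_of_lt hMp
  have hGood : 1 - δ ≤ ∑ ω ∈ G, P ω := by linarith
  calc 1 - δ ≤ ∑ ω ∈ G, P ω := hGood
    _ = ∑ ω : Fin N → X, (if pmin ^ N < (P ω) ^ 2 then P ω else 0) := by
        rw [hG, Finset.sum_filter]
    _ ≤ _ := by
        apply Finset.sum_le_sum
        intro ω _
        by_cases h : pmin ^ N < (P ω) ^ 2
        · rw [if_pos h, if_pos (key ω h)]
        · rw [if_neg h]
          split_ifs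
          · exact hPnn ω
          · exact le_rfl
end
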